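/- arXiv:2305.06257 — 5 statements merged into one kernel-verified Lean document; each statement's English description precedes it below -/
import Mathlib

section
/- Let a ∈ (0,1) be irrational and define f_a(n,m) = n² + m - Σ_{k=1}^{2n-m} ⌊k·a/(1+a)⌋ + Σ_{k=1}^{m} ⌊k·a/(1-a)⌋ on the domain D = {(n,m) ∈ ℤ²_{≥0} : m ≤ 2n}. Then f_a : D → ℤ_{≥0} is a bijection. -/
noncomputable section
namespace Stmt2Aux

variable {a : ℝ}


def kap (a : ℝ) (p : ℤ × ℤ) : ℝ := p.1 * (1 - a) + p.2 * a

def Dm : Set (ℤ × ℤ) := {p | 0 ≤ p.1 ∧ 0 ≤ p.2 ∧ p.2 ≤ 2 * p.1}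

def below (a : ℝ) (p : ℤ × ℤ) : Set (ℤ × ℤ) := {q | q ∈ Dm ∧ kap a q < kap a p}

noncomputable def g (a : ℝ) (p : ℤ × ℤ) : ℕ := (below a p).ncard

variable {a : ℝ}

lemma irrB (ha0 : 0 < a) (hirr : Irrational a) : Irrational (a / (1 + a)) := by
  have h1 : Irrational (a⁻¹ + 1) := by
    simpa using (hirr.inv).add_intCast 1
  have h2 := h1.inv
  convert h2 using 1
  have : a ≠ 0 := ne_of_gt ha0
  field_simp

lemma irrC (ha0 : 0 < a) (hirr : Irrational a) : Irrational (a / (1 - a)) := by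
  have h1 : Irrational (a⁻¹ - 1) := by
    simpa using (hirr.inv).sub_intCast 1
  have h2 := h1.inv
  convert h2 using 1
  have : a ≠ 0 := ne_of_gt ha0
  field_simp

lemma irrBk (ha0 : 0 < a) (hirr : Irrational a) (k : ℤ) (hk : k ≠ 0) :
    Irrational ((k : ℝ) * (a / (1 + a))) := (irrB ha0 hirr).intCast_mul hk

lemma irrCk (ha0 : 0 < a) (hirr : Irrational a) (k : ℤ) (hk : k ≠ 0) :
    Irrational ((k : ℝ) * (a / (1 - a))) := (irrC ha0 hirr).intCast_mul hk

lemma kap_inj (ha0 : 0 < a) (hirr : Irrational a) : Function.Injective (kap a) := by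
  intro p q h
  unfold kap at h
  have key : ((p.1 - q.1 : ℤ) : ℝ) = ((p.1 - q.1 + q.2 - p.2 : ℤ) : ℝ) * a := by
    push_cast; nlinarith [h]
  by_cases hc : (p.1 - q.1 + q.2 - p.2 : ℤ) = 0
  · rw [hc] at key
    simp only [Int.cast_zero, zero_mul] at key
    have h0 : (p.1 - q.1 : ℤ) = 0 := by exact_mod_cast key
    have h1 : p.1 = q.1 := by omega
    have h2 : p.2 = q.2 := by omega
    exact Prod.ext h1 h2
  · exfalso
    have : Irrational (((p.1 - q.1 + q.2 - p.2 : ℤ) : ℝ) * a) := hirr.intCast_mul hc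
    rw [← key] at this
    exact this ⟨((p.1 - q.1 : ℤ) : ℚ), by push_cast; ring⟩

lemma below_finite (ha0 : 0 < a) (ha1 : a < 1) (c : ℝ) :
    {q | q ∈ Dm ∧ kap a q < c}.Finite := by
  set B : ℤ := max 0 ⌈c / (1 - a)⌉ with hB
  apply Set.Finite.subset ((Set.finite_Icc (0:ℤ) B).prod (Set.finite_Icc (0:ℤ) (2*B)))
  rintro ⟨x, y⟩ ⟨⟨hx, hy, hxy⟩, hk⟩
  have h1a : (0:ℝ) < 1 - a := by linarith
  have hx' : (x:ℝ) * (1 - a) ≤ kap a (x, y) := by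
    have hy' : (0:ℝ) ≤ (y:ℝ) * a := mul_nonneg (by exact_mod_cast hy) ha0.le
    unfold kap
    dsimp only
    linarith
  have hxc : (x:ℝ) ≤ c / (1 - a) := by
    rw [le_div_iff₀ h1a]
    linarith [hk]
  have hxB : x ≤ B := by
    have h5 : (x:ℝ) ≤ (⌈c / (1-a)⌉ : ℝ) := le_trans hxc (Int.le_ceil _)
    have h6 : x ≤ ⌈c / (1-a)⌉ := by exact_mod_cast h5
    omega
  exact ⟨⟨hx, hxB⟩, ⟨hy, by omega⟩⟩




lemma stripA (ha0 : 0 < a) (ha1 : a < 1) (hirr : Irrational a)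
    (n m : ℤ) (hn : 0 ≤ n) (hm : 0 ≤ m) (hmn : m ≤ 2 * n) :
    {q | q ∈ Dm ∧ kap a (n, m) ≤ kap a q ∧ kap a q < kap a (n, m) + a} =
      (fun X : ℤ => (n + X, m - ⌊(X : ℝ) * ((1 - a) / a)⌋)) ''
        (Set.Icc (-⌊((2 * n - m : ℤ) : ℝ) * (a / (1 + a))⌋)
                 ⌊((m : ℝ) + 1) * (a / (1 - a))⌋) := by
  have ha : a ≠ 0 := ne_of_gt ha0
  have h1a : (0:ℝ) < 1 - a := by linarith
  have h1a' : (0:ℝ) < 1 + a := by linarith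
  have hsbn : ⌊((2*n - m:ℤ):ℝ) * (a/(1+a))⌋ ≤ n := by
    have h2 : ⌊((2*n - m:ℤ):ℝ) * (a/(1+a))⌋ < n + 1 := by
      apply Int.floor_lt.mpr
      rw [show ((2*n - m : ℤ):ℝ) * (a/(1+a)) = (((2*n - m : ℤ):ℝ) * a)/(1+a) by ring,
        div_lt_iff₀ h1a']
      have hn' : (0:ℝ) ≤ (n:ℝ) := by exact_mod_cast hn
      have hm' : (0:ℝ) ≤ (m:ℝ) := by exact_mod_cast hm
      push_cast
      nlinarith [mul_nonneg hn' h1a.le, mul_nonneg hm' ha0.le]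
    omega
  ext q
  simp only [Set.mem_setOf_eq, Set.mem_image, Set.mem_Icc]
  constructor
  · rintro ⟨⟨hq1, hq2, hq3⟩, hlo, hhi⟩
    unfold kap at hlo hhi
    simp only at hlo hhi
    push_cast at hlo hhi
    have hklo : 0 ≤ ((q.1:ℝ) - n) * (1-a) + ((q.2:ℝ) - m) * a := by nlinarith [hlo]
    have hkhi : ((q.1:ℝ) - n) * (1-a) + ((q.2:ℝ) - m) * a < a := by nlinarith [hhi]
    have hfl : ⌊((q.1 - n : ℤ):ℝ) * ((1 - a) / a)⌋ = m - q.2 := by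
      apply Int.floor_eq_iff.mpr
      constructor
      · rw [show ((q.1 - n : ℤ):ℝ) * ((1-a)/a) = (((q.1:ℝ) - n) * (1-a))/a by push_cast; ring,
          le_div_iff₀ ha0]
        push_cast
        nlinarith [hklo]
      · rw [show ((q.1 - n : ℤ):ℝ) * ((1-a)/a) = (((q.1:ℝ) - n) * (1-a))/a by push_cast; ring,
          div_lt_iff₀ ha0]
        push_cast
        nlinarith [hkhi]
    refine ⟨q.1 - n, ⟨?_, ?_⟩, ?_⟩
    · -- lower bound  - ⌊s b⌋ ≤ q.1 - n
      have hceil : -(((q.1:ℝ) - n) * (1-a))/a ≤ ((2*n - m + 2*(q.1 - n) : ℤ) : ℝ) := by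
        have h0 : (⌈-(((q.1 - n:ℤ):ℝ) * ((1-a)/a))⌉ : ℤ) ≤ 2*n - m + 2*(q.1 - n) := by
          rw [Int.ceil_neg, hfl]; omega
        have h1 := Int.ceil_le.mp h0
        rw [show -(((q.1 - n:ℤ):ℝ) * ((1-a)/a)) = -(((q.1:ℝ) - n) * (1-a))/a by push_cast; ring] at h1
        exact h1
      rw [div_le_iff₀ ha0] at hceil
      have h9 : ((n - q.1 : ℤ):ℝ) ≤ ((2*n - m : ℤ):ℝ) * (a/(1+a)) := by
        rw [show ((2*n - m : ℤ):ℝ) * (a/(1+a)) = (((2*n - m : ℤ):ℝ) * a)/(1+a) by ring,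
          le_div_iff₀ h1a']
        push_cast at hceil ⊢
        nlinarith [hceil]
      have h10 := Int.le_floor.mpr h9
      omega
    · -- upper bound
      apply Int.le_floor.mpr
      have h7 : ((q.1 - n:ℤ):ℝ) * ((1-a)/a) < (m:ℝ) + 1 := by
        calc ((q.1 - n:ℤ):ℝ) * ((1-a)/a) < (⌊((q.1 - n:ℤ):ℝ) * ((1-a)/a)⌋ : ℝ) + 1 :=
              Int.lt_floor_add_one _
        _ ≤ (m:ℝ) + 1 := by
              rw [hfl]
              have : (0:ℝ) ≤ (q.2 : ℝ) := by exact_mod_cast hq2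
              push_cast
              linarith
      rw [show ((q.1 - n : ℤ):ℝ) * ((1-a)/a) = (((q.1:ℝ) - n) * (1-a))/a by push_cast; ring,
        div_lt_iff₀ ha0] at h7
      rw [show ((m:ℝ)+1) * (a/(1-a)) = (((m:ℝ)+1) * a)/(1-a) by ring, le_div_iff₀ h1a]
      push_cast
      nlinarith [h7]
    · -- point equality
      have h11 : m - ⌊((q.1 - n : ℤ):ℝ) * ((1-a)/a)⌋ = q.2 := by omega
      rw [h11]
      have h12 : n + (q.1 - n) = q.1 := by omega
      rw [h12]
  · rintro ⟨X, ⟨hX1, hX2⟩, rfl⟩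
    have hxx : (X:ℝ) * ((1 - a)/a) = ((X:ℝ) * (1 - a)) / a := by ring
    have hf0 : 0 ≤ (X:ℝ) * ((1 - a)/a) - ⌊(X:ℝ) * ((1 - a)/a)⌋ :=
      sub_nonneg.mpr (Int.floor_le _)
    have hf1 : (X:ℝ) * ((1 - a)/a) - ⌊(X:ℝ) * ((1 - a)/a)⌋ < 1 := by
      have := Int.lt_floor_add_one ((X:ℝ) * ((1 - a)/a))
      linarith
    have hkq : kap a (n + X, m - ⌊(X:ℝ) * ((1 - a)/a)⌋)
        = kap a (n, m) + a * ((X:ℝ) * ((1 - a)/a) - ⌊(X:ℝ) * ((1 - a)/a)⌋) := by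
      unfold kap
      push_cast
      field_simp
      ring
    -- range facts
    have hXlow : ((-X : ℤ):ℝ) ≤ ((2*n - m:ℤ):ℝ) * (a/(1+a)) := by
      have := Int.le_floor.mp (show -X ≤ ⌊((2*n - m:ℤ):ℝ) * (a/(1+a))⌋ by omega)
      exact_mod_cast this
    have hXlow2 : -((X:ℝ) * (1-a)) ≤ (2*(n:ℝ) - m) * a + 2 * X * a := by
      rw [show ((2*n - m : ℤ):ℝ) * (a/(1+a)) = (((2*n - m : ℤ):ℝ) * a)/(1+a) by ring,
        le_div_iff₀ h1a'] at hXlow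
      push_cast at hXlow
      nlinarith [hXlow]
    have hXhi : (X:ℝ) < ((m:ℝ)+1) * (a/(1-a)) := by
      have h1 : ((X:ℤ):ℝ) ≤ ((m:ℝ)+1) * (a/(1-a)) := by
        have := Int.le_floor.mp hX2
        exact_mod_cast this
      apply lt_of_le_of_ne h1
      have hirr2 : Irrational (((m+1 : ℤ):ℝ) * (a/(1-a))) := irrCk ha0 hirr (m+1) (by omega)
      intro hcon
      apply hirr2.ne_int X
      push_cast
      push_cast at hcon
      linarith [hcon]
    have hxlt : (X:ℝ) * ((1 - a)/a) < (m:ℝ) + 1 := by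
      rw [hxx, div_lt_iff₀ ha0]
      rw [show ((m:ℝ)+1) * (a/(1-a)) = (((m:ℝ)+1) * a)/(1-a) by ring, lt_div_iff₀ h1a] at hXhi
      nlinarith [hXhi]
    have hFm : ⌊(X:ℝ) * ((1 - a)/a)⌋ ≤ m := by
      have h2 : ⌊(X:ℝ) * ((1 - a)/a)⌋ < m + 1 := by
        apply Int.floor_lt.mpr
        push_cast
        exact hxlt
      omega
    have hFlow : -⌊(X:ℝ) * ((1 - a)/a)⌋ ≤ 2*n - m + 2*X := by
      have hceil : ⌈-((X:ℝ) * ((1 - a)/a))⌉ ≤ 2*n - m + 2*X := by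
        apply Int.ceil_le.mpr
        rw [show -((X:ℝ) * ((1-a)/a)) = -((X:ℝ) * (1-a))/a by ring, div_le_iff₀ ha0]
        push_cast
        nlinarith [hXlow2]
      rw [Int.ceil_neg] at hceil
      exact hceil
    refine ⟨⟨by omega, by simp only; omega, by simp only; omega⟩, ?_, ?_⟩
    · rw [hkq]
      nlinarith [mul_nonneg ha0.le hf0]
    · rw [hkq]
      nlinarith [mul_lt_mul_of_pos_left hf1 ha0]




lemma stripB (ha0 : 0 < a) (ha1 : a < 1)
    (n m : ℤ) :
    {q | q ∈ Dm ∧ kap a (n, m) ≤ kap a q ∧ kap a q < kap a (n, m) + (1 - a)} =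
      (fun j : ℤ => (n - ⌊(j : ℝ) * (a / (1 - a))⌋, m + j)) ''
        {j : ℤ | -m ≤ j ∧ j + 2 * ⌊(j:ℝ) * (a/(1-a))⌋ ≤ 2*n - m} := by
  have ha : a ≠ 0 := ne_of_gt ha0
  have h1a : (0:ℝ) < 1 - a := by linarith
  ext q
  simp only [Set.mem_setOf_eq, Set.mem_image]
  constructor
  · rintro ⟨⟨hq1, hq2, hq3⟩, hlo, hhi⟩
    unfold kap at hlo hhi
    simp only at hlo hhi
    have hklo : 0 ≤ ((q.1:ℝ) - n) * (1-a) + ((q.2:ℝ) - m) * a := by nlinarith [hlo]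
    have hkhi : ((q.1:ℝ) - n) * (1-a) + ((q.2:ℝ) - m) * a < 1 - a := by nlinarith [hhi]
    have hfl : ⌊((q.2 - m : ℤ):ℝ) * (a / (1 - a))⌋ = n - q.1 := by
      apply Int.floor_eq_iff.mpr
      constructor
      · rw [show ((q.2 - m : ℤ):ℝ) * (a/(1-a)) = (((q.2:ℝ) - m) * a)/(1-a) by push_cast; ring,
          le_div_iff₀ h1a]
        push_cast
        nlinarith [hklo]
      · rw [show ((q.2 - m : ℤ):ℝ) * (a/(1-a)) = (((q.2:ℝ) - m) * a)/(1-a) by push_cast; ring,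
          div_lt_iff₀ h1a]
        push_cast
        nlinarith [hkhi]
    refine ⟨q.2 - m, ⟨by omega, by rw [hfl]; omega⟩, ?_⟩
    rw [hfl]
    have h1 : n - (n - q.1) = q.1 := by omega
    have h2 : m + (q.2 - m) = q.2 := by omega
    rw [h1, h2]
  · rintro ⟨j, ⟨hj1, hj2⟩, rfl⟩
    have hf0 : 0 ≤ (j:ℝ) * (a/(1-a)) - ⌊(j:ℝ) * (a/(1-a))⌋ := sub_nonneg.mpr (Int.floor_le _)
    have hf1 : (j:ℝ) * (a/(1-a)) - ⌊(j:ℝ) * (a/(1-a))⌋ < 1 := by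
      have := Int.lt_floor_add_one ((j:ℝ) * (a/(1-a)))
      linarith
    have hkq : kap a (n - ⌊(j:ℝ) * (a/(1-a))⌋, m + j)
        = kap a (n, m) + (1-a) * ((j:ℝ) * (a/(1-a)) - ⌊(j:ℝ) * (a/(1-a))⌋) := by
      unfold kap
      push_cast
      field_simp
      ring
    refine ⟨⟨by simp only; omega, by simp only; omega, by simp only; omega⟩, ?_, ?_⟩
    · rw [hkq]
      nlinarith [mul_nonneg h1a.le hf0]
    · rw [hkq]
      nlinarith [mul_lt_mul_of_pos_left hf1 h1a]




lemma g_split (ha0 : 0 < a) (ha1 : a < 1) (p q : ℤ × ℤ) (δ : ℝ) (hδ0 : 0 ≤ δ)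
    (hδ : kap a q = kap a p + δ) :
    (g a q : ℤ) = g a p +
      ({r | r ∈ Dm ∧ kap a p ≤ kap a r ∧ kap a r < kap a p + δ}.ncard : ℤ) := by
  have hsetq : below a q = below a p ∪
      {r | r ∈ Dm ∧ kap a p ≤ kap a r ∧ kap a r < kap a p + δ} := by
    ext r
    simp only [below, Set.mem_setOf_eq, Set.mem_union, hδ]
    constructor
    · rintro ⟨h1, h2⟩
      rcases lt_or_ge (kap a r) (kap a p) with h | h
      · exact Or.inl ⟨h1, h⟩
      · exact Or.inr ⟨h1, h, h2⟩
    · rintro (⟨h1, h2⟩ | ⟨h1, h2, h3⟩)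
      · exact ⟨h1, by linarith⟩
      · exact ⟨h1, h3⟩
  have hdisj : Disjoint (below a p)
      {r | r ∈ Dm ∧ kap a p ≤ kap a r ∧ kap a r < kap a p + δ} := by
    rw [Set.disjoint_left]
    rintro r ⟨h1, h2⟩ ⟨h3, h4, h5⟩
    exact absurd h4 (not_le.mpr h2)
  have hfin1 : (below a p).Finite := below_finite ha0 ha1 _
  have hfin2 : {r | r ∈ Dm ∧ kap a p ≤ kap a r ∧ kap a r < kap a p + δ}.Finite := by
    apply (below_finite ha0 ha1 (kap a p + δ)).subset
    rintro r ⟨h1, h2, h3⟩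
    exact ⟨h1, h3⟩
  unfold g
  rw [hsetq, Set.ncard_union_eq hdisj hfin1 hfin2]
  push_cast
  ring

lemma kapA (n m : ℤ) : kap a (n, m + 1) = kap a (n, m) + a := by
  unfold kap; push_cast; ring

lemma kapB (n m : ℤ) : kap a (n + 1, m) = kap a (n, m) + (1 - a) := by
  unfold kap; push_cast; ring

lemma gA_rec (ha0 : 0 < a) (ha1 : a < 1) (hirr : Irrational a)
    (n m : ℤ) (hn : 0 ≤ n) (hm : 0 ≤ m) (hmn : m ≤ 2 * n) :
    (g a (n, m + 1) : ℤ) = g a (n, m) + 1 + ⌊((2 * n - m : ℤ) : ℝ) * (a / (1 + a))⌋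
      + ⌊((m : ℝ) + 1) * (a / (1 - a))⌋ := by
  have h1a : (0:ℝ) < 1 - a := by linarith
  have h1a' : (0:ℝ) < 1 + a := by linarith
  rw [g_split ha0 ha1 (n, m) (n, m+1) a ha0.le (kapA n m), stripA ha0 ha1 hirr n m hn hm hmn]
  have hinj : Function.Injective (fun X : ℤ => (n + X, m - ⌊(X : ℝ) * ((1 - a) / a)⌋)) := by
    intro x y hxy
    simp only [Prod.mk.injEq] at hxy
    omega
  rw [Set.ncard_image_of_injective _ hinj, ← Finset.coe_Icc, Set.ncard_coe_finset,
    Int.card_Icc]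
  have hge1 : 0 ≤ ⌊((2 * n - m : ℤ) : ℝ) * (a / (1 + a))⌋ := by
    apply Int.floor_nonneg.mpr
    apply mul_nonneg
    · have hmn' : (m:ℝ) ≤ 2*(n:ℝ) := by exact_mod_cast hmn
      push_cast; linarith
    · positivity
  have hge2 : 0 ≤ ⌊((m : ℝ) + 1) * (a / (1 - a))⌋ := by
    apply Int.floor_nonneg.mpr
    apply mul_nonneg
    · have : (0:ℝ) ≤ (m:ℝ) := by exact_mod_cast hm
      linarith
    · positivity
  rw [Int.toNat_of_nonneg (by omega)]
  ring

lemma gB_rec (ha0 : 0 < a) (ha1 : a < 1)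
    (n m : ℤ) (hn : 0 ≤ n) (hm : 0 ≤ m) (hmn : m ≤ 2 * n) :
    (g a (n + 1, m) : ℤ) = g a (n, m) + m + 1 +
      ({j : ℤ | 1 ≤ j ∧ j + 2 * ⌊(j:ℝ) * (a/(1-a))⌋ ≤ 2*n - m}.ncard : ℤ) := by
  have h1a : (0:ℝ) < 1 - a := by linarith
  rw [g_split ha0 ha1 (n, m) (n + 1, m) (1 - a) h1a.le (kapB n m), stripB ha0 ha1 n m]
  have hinj : Function.Injective (fun j : ℤ => (n - ⌊(j : ℝ) * (a / (1 - a))⌋, m + j)) := by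
    intro x y hxy
    simp only [Prod.mk.injEq] at hxy
    omega
  rw [Set.ncard_image_of_injective _ hinj]
  have hsplit : {j : ℤ | -m ≤ j ∧ j + 2 * ⌊(j:ℝ) * (a/(1-a))⌋ ≤ 2*n - m} =
      (Set.Icc (-m) 0) ∪ {j : ℤ | 1 ≤ j ∧ j + 2 * ⌊(j:ℝ) * (a/(1-a))⌋ ≤ 2*n - m} := by
    ext j
    simp only [Set.mem_setOf_eq, Set.mem_union, Set.mem_Icc]
    constructor
    · rintro ⟨h1, h2⟩
      rcases le_or_gt j 0 with h | h
      · exact Or.inl ⟨h1, h⟩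
      · exact Or.inr ⟨h, h2⟩
    · rintro (⟨h1, h2⟩ | ⟨h1, h2⟩)
      · refine ⟨h1, ?_⟩
        have hfl : ⌊(j:ℝ) * (a/(1-a))⌋ ≤ 0 := by
          apply Int.floor_nonpos
          apply mul_nonpos_of_nonpos_of_nonneg
          · exact_mod_cast h2
          · positivity
        omega
      · exact ⟨by omega, h2⟩
  have hdisj : Disjoint (Set.Icc (-m) (0:ℤ))
      {j : ℤ | 1 ≤ j ∧ j + 2 * ⌊(j:ℝ) * (a/(1-a))⌋ ≤ 2*n - m} := by
    rw [Set.disjoint_left]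
    rintro j ⟨h1, h2⟩ ⟨h3, h4⟩
    omega
  have hfin2 : {j : ℤ | 1 ≤ j ∧ j + 2 * ⌊(j:ℝ) * (a/(1-a))⌋ ≤ 2*n - m}.Finite := by
    apply (Set.finite_Icc 1 (2*n - m)).subset
    rintro j ⟨h1, h2⟩
    have hfl : 0 ≤ ⌊(j:ℝ) * (a/(1-a))⌋ := by
      apply Int.floor_nonneg.mpr
      apply mul_nonneg
      · have : (1:ℝ) ≤ (j:ℝ) := by exact_mod_cast h1
        linarith
      · positivity
    exact ⟨h1, by omega⟩
  rw [hsplit, Set.ncard_union_eq hdisj (Set.finite_Icc _ _) hfin2, ← Finset.coe_Icc,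
    Set.ncard_coe_finset, Int.card_Icc]
  rw [show (0 + 1 - -m).toNat = (m + 1).toNat by omega]
  push_cast
  rw [Int.toNat_of_nonneg (by omega)]
  ring



lemma lemE1 (ha0 : 0 < a) (ha1 : a < 1) (hirr : Irrational a) (t j : ℤ) (hj : 1 ≤ j)
    (hfe : j + 2 * ⌊(j:ℝ) * (a/(1-a))⌋ = t) :
    ((t:ℝ) + 2) * (a/(1+a)) - 1 < (⌊(j:ℝ) * (a/(1-a))⌋ : ℝ) ∧
    (⌊(j:ℝ) * (a/(1-a))⌋ : ℝ) < (t:ℝ) * (a/(1+a)) := by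
  have h1a : (0:ℝ) < 1 - a := by linarith
  have h1a' : (0:ℝ) < 1 + a := by linarith
  set j' : ℤ := ⌊(j:ℝ) * (a/(1-a))⌋ with hj'
  have hle : (j':ℝ) ≤ (j:ℝ) * (a/(1-a)) := Int.floor_le _
  have hne : (j:ℝ) * (a/(1-a)) ≠ (j':ℝ) := (irrCk ha0 hirr j (by omega)).ne_int j'
  have hlt : (j':ℝ) < (j:ℝ) * (a/(1-a)) := lt_of_le_of_ne hle (Ne.symm hne)
  have hup : (j:ℝ) * (a/(1-a)) < (j':ℝ) + 1 := Int.lt_floor_add_one _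
  rw [show (j:ℝ) * (a/(1-a)) = ((j:ℝ) * a)/(1-a) by ring, lt_div_iff₀ h1a] at hlt
  rw [show (j:ℝ) * (a/(1-a)) = ((j:ℝ) * a)/(1-a) by ring, div_lt_iff₀ h1a] at hup
  have htr : (t:ℝ) = (j:ℝ) + 2 * (j':ℝ) := by exact_mod_cast congrArg (fun z : ℤ => (z:ℝ)) hfe.symm
  constructor
  · rw [htr, show ((j:ℝ) + 2*(j':ℝ) + 2) * (a/(1+a)) = (((j:ℝ) + 2*j' + 2) * a)/(1+a) by ring]
    rw [sub_lt_iff_lt_add, div_lt_iff₀ h1a']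
    nlinarith [hup]
  · rw [htr, show ((j:ℝ) + 2*(j':ℝ)) * (a/(1+a)) = (((j:ℝ) + 2*j') * a)/(1+a) by ring,
      lt_div_iff₀ h1a']
    nlinarith [hlt]

lemma lemE2 (ha0 : 0 < a) (ha1 : a < 1) (t j' : ℤ) (ht : 1 ≤ t)
    (h1 : ((t:ℝ) + 2) * (a/(1+a)) - 1 < (j':ℝ)) (h2 : (j':ℝ) < (t:ℝ) * (a/(1+a))) :
    1 ≤ t - 2*j' ∧ (t - 2*j') + 2 * ⌊((t - 2*j' : ℤ):ℝ) * (a/(1-a))⌋ = t := by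
  have h1a : (0:ℝ) < 1 - a := by linarith
  have h1a' : (0:ℝ) < 1 + a := by linarith
  rw [show ((t:ℝ) + 2) * (a/(1+a)) = (((t:ℝ) + 2) * a)/(1+a) by ring,
    sub_lt_iff_lt_add, div_lt_iff₀ h1a'] at h1
  rw [show (t:ℝ) * (a/(1+a)) = ((t:ℝ) * a)/(1+a) by ring, lt_div_iff₀ h1a'] at h2
  have hg1 : (j':ℝ) * (1-a) < ((t:ℝ) - 2*j') * a := by nlinarith [h2]
  have hg2 : ((t:ℝ) - 2*j') * a < ((j':ℝ) + 1) * (1-a) := by nlinarith [h1]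
  have hjpos : 1 ≤ t - 2*j' := by
    by_contra hc
    push_neg at hc
    have hc' : ((t:ℝ) - 2*j') ≤ 0 := by
      have : ((t - 2*j' : ℤ):ℝ) ≤ 0 := by exact_mod_cast (by omega : (t - 2*j' : ℤ) ≤ 0)
      push_cast at this
      linarith
    have hja : ((t:ℝ) - 2*j') * a ≤ 0 := mul_nonpos_of_nonpos_of_nonneg hc' ha0.le
    have hj'neg : (j':ℝ) < 0 := by nlinarith [hg1]
    have : j' < 0 := by exact_mod_cast hj'neg
    omega
  refine ⟨hjpos, ?_⟩
  have hfl : ⌊((t - 2*j' : ℤ):ℝ) * (a/(1-a))⌋ = j' := by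
    apply Int.floor_eq_iff.mpr
    constructor
    · rw [show ((t - 2*j' : ℤ):ℝ) * (a/(1-a)) = (((t:ℝ) - 2*j') * a)/(1-a) by push_cast; ring,
        le_div_iff₀ h1a]
      linarith [hg1]
    · rw [show ((t - 2*j' : ℤ):ℝ) * (a/(1-a)) = (((t:ℝ) - 2*j') * a)/(1-a) by push_cast; ring,
        div_lt_iff₀ h1a]
      push_cast
      linarith [hg2]
  rw [hfl]
  omega

lemma Mfin (s : ℤ) (ha0 : 0 < a) (ha1 : a < 1) :
    {j : ℤ | 1 ≤ j ∧ j + 2 * ⌊(j:ℝ) * (a/(1-a))⌋ ≤ s}.Finite := by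
  have h1a : (0:ℝ) < 1 - a := by linarith
  apply (Set.finite_Icc 1 s).subset
  rintro j ⟨h1, h2⟩
  have hfl : 0 ≤ ⌊(j:ℝ) * (a/(1-a))⌋ := by
    apply Int.floor_nonneg.mpr
    apply mul_nonneg
    · have : (1:ℝ) ≤ (j:ℝ) := by exact_mod_cast h1
      linarith
    · positivity
  exact ⟨h1, by omega⟩

lemma star_base (ha0 : 0 < a) (ha1 : a < 1) :
    ({j : ℤ | 1 ≤ j ∧ j + 2 * ⌊(j:ℝ) * (a/(1-a))⌋ ≤ (0:ℤ)}.ncard : ℤ)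
      + ⌊((0 + 1 : ℤ):ℝ) * (a / (1 + a))⌋ + ⌊((0 + 2 : ℤ):ℝ) * (a / (1 + a))⌋ = 0 := by
  have h1a : (0:ℝ) < 1 - a := by linarith
  have h1a' : (0:ℝ) < 1 + a := by linarith
  · 
    have he : {j : ℤ | 1 ≤ j ∧ j + 2 * ⌊(j:ℝ) * (a/(1-a))⌋ ≤ 0} = ∅ := by
      ext j
      simp only [Set.mem_setOf_eq, Set.mem_empty_iff_false, iff_false, not_and, not_le]
      intro hj
      have hfl : 0 ≤ ⌊(j:ℝ) * (a/(1-a))⌋ := by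
        apply Int.floor_nonneg.mpr
        apply mul_nonneg
        · have : (1:ℝ) ≤ (j:ℝ) := by exact_mod_cast hj
          linarith
        · positivity
      omega
    rw [he]
    have hf1 : ⌊((0 + 1 : ℤ):ℝ) * (a / (1 + a))⌋ = 0 := by
      apply Int.floor_eq_zero_iff.mpr
      constructor
      · push_cast; positivity
      · push_cast
        rw [one_mul, div_lt_iff₀ h1a']
        linarith
    have hf2 : ⌊((0 + 2 : ℤ):ℝ) * (a / (1 + a))⌋ = 0 := by
      apply Int.floor_eq_zero_iff.mpr
      constructor
      · push_cast; positivity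
      · push_cast
        rw [show (2:ℝ) * (a/(1+a)) = 2*a/(1+a) by ring, div_lt_iff₀ h1a']
        linarith
    rw [hf1, hf2]
    simp
lemma star_step (ha0 : 0 < a) (ha1 : a < 1) (hirr : Irrational a) (s : ℤ) (hs : 0 ≤ s)
    (ih : 0 ≤ s → ({j : ℤ | 1 ≤ j ∧ j + 2 * ⌊(j:ℝ) * (a/(1-a))⌋ ≤ s}.ncard : ℤ)
      + ⌊((s + 1 : ℤ):ℝ) * (a / (1 + a))⌋ + ⌊((s + 2 : ℤ):ℝ) * (a / (1 + a))⌋ = s) :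
    ({j : ℤ | 1 ≤ j ∧ j + 2 * ⌊(j:ℝ) * (a/(1-a))⌋ ≤ s + 1}.ncard : ℤ)
      + ⌊((s + 1 + 1 : ℤ):ℝ) * (a / (1 + a))⌋ + ⌊((s + 1 + 2 : ℤ):ℝ) * (a / (1 + a))⌋
      = s + 1 := by
  have h1a : (0:ℝ) < 1 - a := by linarith
  have h1a' : (0:ℝ) < 1 + a := by linarith
  · have hbpos : (0:ℝ) < a / (1 + a) := by positivity
    set t : ℤ := s + 1 with htdef
    have ht1 : 1 ≤ t := by omega
    -- the unique integer near (t+2)*b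
    set u : ℤ := ⌊((t + 2 : ℤ):ℝ) * (a / (1 + a))⌋ with hudef
    have hult : ((u:ℤ):ℝ) < ((t + 2 : ℤ):ℝ) * (a / (1 + a)) := by
      apply lt_of_le_of_ne (Int.floor_le _)
      exact Ne.symm ((irrBk ha0 hirr (t+2) (by omega)).ne_int u)
    have hugt : ((t + 2 : ℤ):ℝ) * (a / (1 + a)) - 1 < (u:ℝ) := Int.sub_one_lt_floor _
    have htb_irr : Irrational (((t:ℤ):ℝ) * (a / (1 + a))) := irrBk ha0 hirr t (by omega)
    have hune : ((u:ℤ):ℝ) ≠ ((t:ℤ):ℝ) * (a / (1 + a)) := fun h => htb_irr.ne_int u h.symm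
    -- set splitting
    have hssplit : {j : ℤ | 1 ≤ j ∧ j + 2 * ⌊(j:ℝ) * (a/(1-a))⌋ ≤ t} =
        {j : ℤ | 1 ≤ j ∧ j + 2 * ⌊(j:ℝ) * (a/(1-a))⌋ ≤ s} ∪
        {j : ℤ | 1 ≤ j ∧ j + 2 * ⌊(j:ℝ) * (a/(1-a))⌋ = t} := by
      ext j
      simp only [Set.mem_setOf_eq, Set.mem_union]
      omega
    have hdisj : Disjoint {j : ℤ | 1 ≤ j ∧ j + 2 * ⌊(j:ℝ) * (a/(1-a))⌋ ≤ s}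
        {j : ℤ | 1 ≤ j ∧ j + 2 * ⌊(j:ℝ) * (a/(1-a))⌋ = t} := by
      rw [Set.disjoint_left]
      rintro j ⟨h1, h2⟩ ⟨h3, h4⟩
      omega
    have hfinE : {j : ℤ | 1 ≤ j ∧ j + 2 * ⌊(j:ℝ) * (a/(1-a))⌋ = t}.Finite := by
      apply (Mfin t ha0 ha1).subset
      rintro j ⟨h1, h2⟩
      exact ⟨h1, by omega⟩
    have hcard : ({j : ℤ | 1 ≤ j ∧ j + 2 * ⌊(j:ℝ) * (a/(1-a))⌋ ≤ t}.ncard : ℤ) =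
        ({j : ℤ | 1 ≤ j ∧ j + 2 * ⌊(j:ℝ) * (a/(1-a))⌋ ≤ s}.ncard : ℤ) +
        ({j : ℤ | 1 ≤ j ∧ j + 2 * ⌊(j:ℝ) * (a/(1-a))⌋ = t}.ncard : ℤ) := by
      rw [hssplit, Set.ncard_union_eq hdisj (Mfin s ha0 ha1) hfinE]
      push_cast
      ring
    rcases lt_or_gt_of_ne hune with hL | hR
    · -- u < t*b : E is a singleton, floors (t)b and (t+2)b agree
      have hfleq : ⌊((t : ℤ):ℝ) * (a / (1 + a))⌋ = u := by
        have hmono : ⌊((t : ℤ):ℝ) * (a / (1 + a))⌋ ≤ u := by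
          rw [hudef]
          apply Int.floor_le_floor
          have : (0:ℝ) ≤ a / (1+a) := by positivity
          have h2 : ((t:ℤ):ℝ) ≤ ((t + 2 : ℤ):ℝ) := by push_cast; linarith
          nlinarith [h2, this]
        have h3 : u ≤ ⌊((t : ℤ):ℝ) * (a / (1 + a))⌋ := Int.le_floor.mpr hL.le
        omega
      have hE : {j : ℤ | 1 ≤ j ∧ j + 2 * ⌊(j:ℝ) * (a/(1-a))⌋ = t} = {t - 2*u} := by
        obtain ⟨hj1, hj2⟩ := lemE2 ha0 ha1 t u ht1 (by push_cast at hugt ⊢; linarith) (by exact_mod_cast hL)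
        ext j
        simp only [Set.mem_setOf_eq, Set.mem_singleton_iff]
        constructor
        · rintro ⟨h1, h2⟩
          obtain ⟨hb1, hb2⟩ := lemE1 ha0 ha1 hirr t j h1 h2
          -- ⌊jγ⌋ and u both in unit interval
          have hju : ⌊(j:ℝ) * (a/(1-a))⌋ = u := by
            have c1 : (⌊(j:ℝ) * (a/(1-a))⌋ : ℝ) < ((t+2:ℤ):ℝ) * (a/(1+a)) := by
              push_cast at hb2 hL ⊢
              linarith [hbpos]
            have c2 : ((t+2:ℤ):ℝ) * (a/(1+a)) - 1 < (⌊(j:ℝ) * (a/(1-a))⌋ : ℝ) := by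
              push_cast at hb1 ⊢
              linarith
            have d1 : ⌊(j:ℝ) * (a/(1-a))⌋ ≤ u := by
              rw [hudef]
              apply Int.le_floor.mpr c1.le
            have d2 : u - 1 < ⌊(j:ℝ) * (a/(1-a))⌋ := by
              have : ((u:ℝ) - 1) < (⌊(j:ℝ) * (a/(1-a))⌋ : ℝ) := by linarith [hugt, c2]
              exact_mod_cast this
            omega
          omega
        · rintro rfl
          exact ⟨hj1, hj2⟩
      have hEcard : ({j : ℤ | 1 ≤ j ∧ j + 2 * ⌊(j:ℝ) * (a/(1-a))⌋ = t}.ncard : ℤ) = 1 := by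
        rw [hE, Set.ncard_singleton]
        norm_num
      rw [hcard, hEcard, show (t + 1 : ℤ) = s + 2 by omega, ← hfleq]
      have ih' := ih (by omega)
      linarith [ih']
    · -- t*b < u : E empty, floor increment
      have hflt : ⌊((t : ℤ):ℝ) * (a / (1 + a))⌋ < u := Int.floor_lt.mpr hR
      have hfle : u ≤ ⌊((t : ℤ):ℝ) * (a / (1 + a))⌋ + 1 := by
        have h5 : ((t+2:ℤ):ℝ) * (a/(1+a)) < (⌊((t : ℤ):ℝ) * (a / (1 + a))⌋ : ℝ) + 2 := by
          have h6 : ((t:ℤ):ℝ) * (a/(1+a)) < (⌊((t : ℤ):ℝ) * (a / (1 + a))⌋ : ℝ) + 1 :=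
            Int.lt_floor_add_one _
          have h7 : (2:ℝ) * (a/(1+a)) < 1 := by
            rw [show (2:ℝ) * (a/(1+a)) = 2*a/(1+a) by ring, div_lt_iff₀ h1a']
            linarith
          push_cast at h6 ⊢
          nlinarith [h6, h7]
        have h9 : u < ⌊((t : ℤ):ℝ) * (a / (1 + a))⌋ + 2 := by
          rw [hudef]
          apply Int.floor_lt.mpr
          push_cast at h5 ⊢
          linarith
        omega
      have huval : u = ⌊((t : ℤ):ℝ) * (a / (1 + a))⌋ + 1 := by omega
      have hE : {j : ℤ | 1 ≤ j ∧ j + 2 * ⌊(j:ℝ) * (a/(1-a))⌋ = t} = ∅ := by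
        ext j
        simp only [Set.mem_setOf_eq, Set.mem_empty_iff_false, iff_false, not_and]
        intro h1 h2
        obtain ⟨hb1, hb2⟩ := lemE1 ha0 ha1 hirr t j h1 h2
        have c2 : ((t+2:ℤ):ℝ) * (a/(1+a)) - 1 < (⌊(j:ℝ) * (a/(1-a))⌋ : ℝ) := by
          push_cast at hb1 ⊢
          linarith
        have d2 : u - 1 < ⌊(j:ℝ) * (a/(1-a))⌋ := by
          have : ((u:ℝ) - 1) < (⌊(j:ℝ) * (a/(1-a))⌋ : ℝ) := by linarith [hugt, c2]
          exact_mod_cast this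
        have d1 : (⌊(j:ℝ) * (a/(1-a))⌋ : ℝ) < (u:ℝ) := by
          push_cast at hb2 hR ⊢
          linarith
        have d1' : ⌊(j:ℝ) * (a/(1-a))⌋ < u := by exact_mod_cast d1
        omega
      have hE0 : ({j : ℤ | 1 ≤ j ∧ j + 2 * ⌊(j:ℝ) * (a/(1-a))⌋ = t}.ncard : ℤ) = 0 := by
        rw [hE]; simp
      rw [hcard, hE0, show (t + 1 : ℤ) = s + 2 by omega, huval]
      have ih' := ih (by omega)
      linarith [ih']

lemma star (ha0 : 0 < a) (ha1 : a < 1) (hirr : Irrational a) (s : ℤ) (hs : 0 ≤ s) :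
    ({j : ℤ | 1 ≤ j ∧ j + 2 * ⌊(j:ℝ) * (a/(1-a))⌋ ≤ s}.ncard : ℤ)
      + ⌊((s + 1 : ℤ):ℝ) * (a / (1 + a))⌋ + ⌊((s + 2 : ℤ):ℝ) * (a / (1 + a))⌋ = s := by
  obtain ⟨n, rfl⟩ := Int.eq_ofNat_of_zero_le hs
  induction n with
  | zero => exact_mod_cast star_base ha0 ha1
  | succ n ih =>
    have hstep := star_step ha0 ha1 hirr n (by positivity) (fun _ => ih (by positivity))
    convert hstep using 4 <;> push_cast <;> ring




lemma fl_congr {x y : ℝ} (h : x = y) : ⌊x⌋ = ⌊y⌋ := by rw [h]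

lemma g00 (ha0 : 0 < a) (ha1 : a < 1) : g a (0, 0) = 0 := by
  unfold g
  convert Set.ncard_empty (ℤ × ℤ)
  ext q
  simp only [below, Dm, kap, Set.mem_setOf_eq, Set.mem_empty_iff_false, iff_false, not_and]
  rintro ⟨h1, h2, h3⟩
  push_cast
  simp only [not_lt]
  have e1 : (0:ℝ) ≤ (q.1:ℝ) * (1 - a) :=
    mul_nonneg (by exact_mod_cast h1) (by linarith)
  have e2 : (0:ℝ) ≤ (q.2:ℝ) * a := mul_nonneg (by exact_mod_cast h2) ha0.le
  nlinarith [e1, e2]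

noncomputable def F (a : ℝ) (p : ℕ × ℕ) : ℤ :=
  (p.1 : ℤ) ^ 2 + p.2
    - ∑ k ∈ Finset.Icc 1 (2 * p.1 - p.2), ⌊(k : ℝ) * a / (1 + a)⌋
    + ∑ k ∈ Finset.Icc 1 p.2, ⌊(k : ℝ) * a / (1 - a)⌋

lemma g_eq_f (ha0 : 0 < a) (ha1 : a < 1) (hirr : Irrational a) :
    ∀ n m : ℕ, m ≤ 2 * n → (g a ((n:ℤ), (m:ℤ)) : ℤ) = F a (n, m) := by
  intro n
  induction n with
  | zero =>
    intro m hmn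
    have hm0 : m = 0 := by omega
    subst hm0
    rw [show ((0:ℕ):ℤ) = 0 by norm_num]
    rw [g00 ha0 ha1]
    simp [F]
  | succ n ihn =>
    -- column base : m = 0
    have hbase : (g a ((n+1 : ℕ), (0:ℕ)) : ℤ) = F a (n+1, 0) := by
      have h1 := gB_rec ha0 ha1 (n:ℤ) 0 (by positivity) le_rfl (by positivity)
      have h2 := star ha0 ha1 hirr (2*(n:ℤ) - 0) (by omega)
      have h3 := ihn 0 (by omega)
      have hc1 : ((n:ℤ), (0:ℤ)) = (((n:ℕ):ℤ), ((0:ℕ):ℤ)) := by norm_num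
      rw [hc1] at h1
      rw [h3] at h1
      have hgoal : (g a (((n+1:ℕ):ℤ), ((0:ℕ):ℤ)) : ℤ) =
          F a (n, 0) + 0 + 1 + ({j : ℤ | 1 ≤ j ∧ j + 2 * ⌊(j:ℝ) * (a/(1-a))⌋ ≤ 2*(n:ℤ) - 0}.ncard : ℤ) := by
        rw [show (((n+1:ℕ):ℤ), ((0:ℕ):ℤ)) = ((n:ℤ) + 1, (0:ℤ)) by push_cast; ring_nf]
        exact h1
      rw [hgoal]
      -- now use star to replace the ncard
      have hM : ({j : ℤ | 1 ≤ j ∧ j + 2 * ⌊(j:ℝ) * (a/(1-a))⌋ ≤ 2*(n:ℤ) - 0}.ncard : ℤ)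
          = 2*(n:ℤ) - ⌊((2*(n:ℤ) - 0 + 1 : ℤ):ℝ) * (a / (1 + a))⌋
            - ⌊((2*(n:ℤ) - 0 + 2 : ℤ):ℝ) * (a / (1 + a))⌋ := by omega
      rw [hM]
      -- expand F at n+1,0 and n,0
      unfold F
      simp only [Nat.sub_zero, Finset.Icc_self, Prod.fst, Prod.snd]
      rw [show 2 * (n+1) = (2*n + 1) + 1 by ring]
      rw [Finset.sum_Icc_succ_top (by omega : 1 ≤ (2*n+1) + 1), Finset.sum_Icc_succ_top (by omega : 1 ≤ 2*n + 1)]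
      have hf1 : ⌊((2*n+1 : ℕ) : ℝ) * a / (1 + a)⌋ = ⌊((2*(n:ℤ) - 0 + 1 : ℤ):ℝ) * (a / (1 + a))⌋ := by
        apply fl_congr; push_cast; ring
      have hf2 : ⌊(((2*n+1)+1 : ℕ) : ℝ) * a / (1 + a)⌋ = ⌊((2*(n:ℤ) - 0 + 2 : ℤ):ℝ) * (a / (1 + a))⌋ := by
        apply fl_congr; push_cast; ring
      rw [hf1, hf2]
      push_cast
      ring
    intro m
    induction m with
    | zero => intro _; exact hbase
    | succ m ihm =>
      intro hmn
      have h1 := gA_rec ha0 ha1 hirr ((n:ℤ)+1) (m:ℤ) (by positivity) (by positivity) (by push_cast; omega)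
      have h2 := ihm (by omega)
      rw [show (((n:ℤ)+1), ((m:ℤ)+1)) = (((n+1:ℕ):ℤ), ((m+1:ℕ):ℤ)) by push_cast; ring_nf] at h1
      rw [show (((n:ℤ)+1), ((m:ℤ))) = (((n+1:ℕ):ℤ), ((m:ℕ):ℤ)) by push_cast; ring_nf] at h1
      rw [h2] at h1
      rw [h1]
      unfold F
      simp only [Prod.fst, Prod.snd]
      have hsub : 2 * (n+1) - m = (2*(n+1) - (m+1)) + 1 := by omega
      rw [hsub, Finset.sum_Icc_succ_top (by omega : 1 ≤ (2*(n+1) - (m+1)) + 1)]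
      rw [Finset.sum_Icc_succ_top (by omega : 1 ≤ m + 1)]
      have hf1 : ⌊(((2*(n+1) - (m+1)) + 1 : ℕ) : ℝ) * a / (1 + a)⌋
          = ⌊((2 * ((n:ℤ)+1) - (m:ℤ) : ℤ):ℝ) * (a / (1 + a))⌋ := by
        apply fl_congr
        have : ((2*(n+1) - (m+1) + 1 : ℕ) : ℝ) = 2 * ((n:ℝ)+1) - (m:ℝ) := by
          push_cast [Nat.cast_sub (by omega : m + 1 ≤ 2*(n+1))]
          ring
        rw [this]
        push_cast
        ring
      have hf2 : ⌊((m+1 : ℕ) : ℝ) * a / (1 - a)⌋ = ⌊((m:ℝ) + 1) * (a / (1 - a))⌋ := by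
        apply fl_congr; push_cast; ring
      rw [hf1, hf2]
      push_cast
      ring




lemma below_fin (ha0 : 0 < a) (ha1 : a < 1) (p : ℤ × ℤ) : (below a p).Finite :=
  below_finite ha0 ha1 _

lemma g_lt (ha0 : 0 < a) (ha1 : a < 1) {p q : ℤ × ℤ} (hp : p ∈ Dm)
    (hk : kap a p < kap a q) : g a p < g a q := by
  apply Set.ncard_lt_ncard _ (below_fin ha0 ha1 q)
  constructor
  · rintro r ⟨h1, h2⟩
    exact ⟨h1, lt_trans h2 hk⟩
  · intro hsub
    have hmem : p ∈ below a q := ⟨hp, hk⟩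
    have := hsub hmem
    exact absurd this.2 (lt_irrefl _)

lemma g_injOn (ha0 : 0 < a) (ha1 : a < 1) (hirr : Irrational a) {p q : ℤ × ℤ}
    (hp : p ∈ Dm) (hq : q ∈ Dm) (h : g a p = g a q) : p = q := by
  by_contra hne
  have hkne : kap a p ≠ kap a q := fun hc => hne (kap_inj ha0 hirr hc)
  rcases lt_or_gt_of_ne hkne with hlt | hgt
  · exact absurd h (Nat.ne_of_lt (g_lt ha0 ha1 hp hlt))
  · exact absurd h.symm (Nat.ne_of_lt (g_lt ha0 ha1 hq hgt))

lemma g_big (ha0 : 0 < a) (ha1 : a < 1) (N : ℕ) : N ≤ g a ((N:ℤ), 0) := by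
  have hsub : (fun i : ℕ => ((i:ℤ), (0:ℤ))) '' ↑(Finset.range N) ⊆ below a ((N:ℤ), 0) := by
    rintro r ⟨i, hi, rfl⟩
    simp only [Finset.coe_range, Set.mem_Iio] at hi
    refine ⟨⟨by positivity, le_rfl, by positivity⟩, ?_⟩
    unfold kap
    simp only
    have h1 : (i:ℝ) < (N:ℝ) := by exact_mod_cast hi
    have h2 : (0:ℝ) < 1 - a := by linarith
    push_cast
    nlinarith [mul_lt_mul_of_pos_right h1 h2]
  have hcard : ((fun i : ℕ => ((i:ℤ), (0:ℤ))) '' ↑(Finset.range N)).ncard = N := by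
    rw [Set.ncard_image_of_injective _ (fun x y hxy => by
      simp only [Prod.mk.injEq] at hxy
      exact_mod_cast hxy.1)]
    rw [Set.ncard_coe_finset, Finset.card_range]
  calc N = _ := hcard.symm
  _ ≤ _ := Set.ncard_le_ncard hsub (below_fin ha0 ha1 _)

lemma g_pred (ha0 : 0 < a) (ha1 : a < 1) (hirr : Irrational a) (q : ℤ × ℤ)
    (h1 : 1 ≤ g a q) : ∃ p ∈ Dm, g a p = g a q - 1 := by
  have hfin := below_fin ha0 ha1 q
  have hne : (below a q).Nonempty := by
    apply Set.nonempty_of_ncard_ne_zero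
    unfold g at h1
    omega
  obtain ⟨P, hPmem, hPmax⟩ := Set.Finite.exists_maximalFor (kap a) _ hfin hne
  refine ⟨P, hPmem.1, ?_⟩
  have hbel : below a P = below a q \ {P} := by
    ext r
    constructor
    · rintro ⟨hr1, hr2⟩
      refine ⟨⟨hr1, lt_trans hr2 hPmem.2⟩, ?_⟩
      simp only [Set.mem_singleton_iff]
      rintro rfl
      exact absurd hr2 (lt_irrefl _)
    · rintro ⟨⟨hr1, hr2⟩, hrne⟩
      simp only [Set.mem_singleton_iff] at hrne
      refine ⟨hr1, ?_⟩
      rcases lt_trichotomy (kap a r) (kap a P) with h | h | h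
      · exact h
      · exact absurd (kap_inj ha0 hirr h) hrne
      · exact absurd (hPmax (j := r) ⟨hr1, hr2⟩ h.le) (by
          intro hc
          exact absurd hc (not_le.mpr h))
  unfold g
  rw [hbel, Set.ncard_diff_singleton_of_mem hPmem]

lemma g_surj (ha0 : 0 < a) (ha1 : a < 1) (hirr : Irrational a) (N : ℕ) :
    ∃ p ∈ Dm, g a p = N := by
  suffices h : ∀ k : ℕ, ∀ q ∈ Dm, g a q = k → ∀ N' : ℕ, N' ≤ k → ∃ p ∈ Dm, g a p = N' by
    have hq : ((N:ℤ), (0:ℤ)) ∈ Dm := ⟨by positivity, le_rfl, by positivity⟩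
    exact h (g a ((N:ℤ), 0)) _ hq rfl N (g_big ha0 ha1 N)
  intro k
  induction k with
  | zero =>
    intro q hq hgq N' hN'
    exact ⟨q, hq, by omega⟩
  | succ k ih =>
    intro q hq hgq N' hN'
    rcases Nat.eq_or_lt_of_le hN' with h | h
    · exact ⟨q, hq, by omega⟩
    · obtain ⟨p, hp, hgp⟩ := g_pred ha0 ha1 hirr q (by omega)
      exact ih p hp (by omega) N' (by omega)



end Stmt2Aux
end

theorem stmt_2 (a : ℝ) (ha0 : 0 < a) (ha1 : a < 1) (hirr : Irrational a) :
    Set.BijOn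
      (fun p : ℕ × ℕ =>
        (p.1 : ℤ) ^ 2 + p.2
          - ∑ k ∈ Finset.Icc 1 (2 * p.1 - p.2), ⌊(k : ℝ) * a / (1 + a)⌋
          + ∑ k ∈ Finset.Icc 1 p.2, ⌊(k : ℝ) * a / (1 - a)⌋)
      {p : ℕ × ℕ | p.2 ≤ 2 * p.1}
      {z : ℤ | 0 ≤ z} := by
  open Stmt2Aux in
  have hFg : ∀ p : ℕ × ℕ, p ∈ {p : ℕ × ℕ | p.2 ≤ 2 * p.1} →
      ((p.1 : ℤ) ^ 2 + p.2
          - ∑ k ∈ Finset.Icc 1 (2 * p.1 - p.2), ⌊(k : ℝ) * a / (1 + a)⌋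
          + ∑ k ∈ Finset.Icc 1 p.2, ⌊(k : ℝ) * a / (1 - a)⌋)
        = (Stmt2Aux.g a ((p.1 : ℤ), (p.2 : ℤ)) : ℤ) := by
    rintro ⟨n, m⟩ hmem
    exact (Stmt2Aux.g_eq_f ha0 ha1 hirr n m hmem).symm
  have hDm : ∀ p : ℕ × ℕ, p ∈ {p : ℕ × ℕ | p.2 ≤ 2 * p.1} →
      ((p.1 : ℤ), (p.2 : ℤ)) ∈ Stmt2Aux.Dm := by
    rintro ⟨n, m⟩ hmem
    simp only [Set.mem_setOf_eq] at hmem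
    refine ⟨by positivity, by positivity, ?_⟩
    show ((m:ℕ):ℤ) ≤ 2 * ((n:ℕ):ℤ)
    exact_mod_cast hmem
  refine ⟨?_, ?_, ?_⟩
  · -- MapsTo
    intro p hp
    simp only [Set.mem_setOf_eq]
    rw [hFg p hp]
    positivity
  · -- InjOn
    intro p hp q hq hpq
    simp only at hpq
    rw [hFg p hp, hFg q hq] at hpq
    have hg : Stmt2Aux.g a ((p.1 : ℤ), (p.2 : ℤ)) = Stmt2Aux.g a ((q.1 : ℤ), (q.2 : ℤ)) := by
      exact_mod_cast hpq
    have := Stmt2Aux.g_injOn ha0 ha1 hirr (hDm p hp) (hDm q hq) hg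
    simp only [Prod.mk.injEq] at this
    have h1 : p.1 = q.1 := by exact_mod_cast this.1
    have h2 : p.2 = q.2 := by exact_mod_cast this.2
    exact Prod.ext h1 h2
  · -- SurjOn
    intro z hz
    simp only [Set.mem_setOf_eq] at hz
    obtain ⟨P, hP, hgP⟩ := Stmt2Aux.g_surj ha0 ha1 hirr z.toNat
    obtain ⟨hP1, hP2, hP3⟩ := hP
    refine ⟨(P.1.toNat, P.2.toNat), ?_, ?_⟩
    · simp only [Set.mem_setOf_eq]
      omega
    · have hmem : (P.1.toNat, P.2.toNat) ∈ {p : ℕ × ℕ | p.2 ≤ 2 * p.1} := by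
        simp only [Set.mem_setOf_eq]
        omega
      simp only
      rw [hFg _ hmem]
      have hPeq : (((P.1.toNat : ℕ) : ℤ), ((P.2.toNat : ℕ) : ℤ)) = P := by
        ext <;> simp <;> omega
      rw [hPeq, hgP]
      omega
end

section
/- Let a ∈ (0,1) be irrational and (n,m) ∈ ℤ²_{≥0} with m ≤ 2n. The number of lattice points (x,y) ∈ ℤ²_{≥0} with y ≤ 2x that lie on or below the line of slope -(1-a)/a through (n,m) (i.e. satisfying (1-a)·x + a·y ≤ (1-a)·n + a·m) equals f_a(n,m) + 1, where f_a(n,m) = n² + m - Σ_{k=1}^{2n-m} ⌊k·a/(1+a)⌋ + Σ_{k=1}^{m} ⌊k·a/(1-a)⌋. -/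
open Finset

lemma recip (α : ℝ) (hα : 0 < α) (hirr : Irrational α) (K : ℕ) :
    (∑ k ∈ Ioc 0 K, ⌊(k : ℝ) * α⌋) + ∑ j ∈ Ioc 0 (⌊(K : ℝ) * α⌋).toNat, ⌊(j : ℝ) / α⌋
      = (K : ℤ) * ⌊(K : ℝ) * α⌋ := by
  induction K with
  | zero => simp
  | succ K ih =>
    have hKα : (0:ℝ) ≤ (K:ℝ) * α := by positivity
    have hfK : (0:ℤ) ≤ ⌊(K : ℝ) * α⌋ := Int.floor_nonneg.2 hKα
    have hfK1 : (0:ℤ) ≤ ⌊((K+1 : ℕ) : ℝ) * α⌋ := by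
      apply Int.floor_nonneg.2; positivity
    set A := (⌊(K : ℝ) * α⌋).toNat with hA
    set B := (⌊((K+1 : ℕ) : ℝ) * α⌋).toNat with hB
    have hAZ : (A : ℤ) = ⌊(K : ℝ) * α⌋ := Int.toNat_of_nonneg hfK
    have hBZ : (B : ℤ) = ⌊((K+1 : ℕ) : ℝ) * α⌋ := Int.toNat_of_nonneg hfK1
    have hAB : A ≤ B := by
      apply Int.toNat_le_toNat; apply Int.floor_le_floor
      have : (0:ℝ) ≤ α := le_of_lt hα
      push_cast; nlinarith
    have hsplit : ∑ j ∈ Ioc 0 A, ⌊(j:ℝ)/α⌋ + ∑ j ∈ Ioc A B, ⌊(j:ℝ)/α⌋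
        = ∑ j ∈ Ioc 0 B, ⌊(j:ℝ)/α⌋ :=
      Finset.sum_Ioc_consecutive _ (Nat.zero_le A) hAB
    have hconst : ∀ j ∈ Ioc A B, ⌊(j:ℝ)/α⌋ = K := by
      intro j hj
      rw [Finset.mem_Ioc] at hj
      have hj1 : (A:ℝ) + 1 ≤ j := by exact_mod_cast hj.1
      have h1 : (K:ℝ) * α < j := by
        have := Int.lt_floor_add_one ((K:ℝ)*α)
        have hAr : ((A:ℤ):ℝ) = (⌊(K : ℝ) * α⌋ : ℝ) := by exact_mod_cast hAZ
        push_cast at hAr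
        linarith [hAr ▸ hj1]
      have h2 : (j:ℝ) < ((K:ℝ)+1) * α := by
        have hle : (j:ℝ) ≤ ((K+1:ℕ):ℝ) * α := by
          have : (j:ℤ) ≤ ⌊((K+1 : ℕ) : ℝ) * α⌋ := by rw [← hBZ]; exact_mod_cast hj.2
          calc (j:ℝ) ≤ (⌊((K+1 : ℕ) : ℝ) * α⌋ : ℝ) := by exact_mod_cast this
          _ ≤ _ := Int.floor_le _
        have hne : (j:ℝ) ≠ ((K+1:ℕ):ℝ) * α := by
          intro h
          exact (hirr.natCast_mul (Nat.succ_ne_zero K)).ne_int j (by exact_mod_cast h.symm)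
        push_cast at hle hne ⊢
        exact lt_of_le_of_ne hle hne
      rw [Int.floor_eq_iff]
      constructor
      · rw [le_div_iff₀ hα]; push_cast; linarith
      · rw [div_lt_iff₀ hα]; push_cast; linarith
    have hBZ' : (B : ℤ) = ⌊((K:ℝ) + 1) * α⌋ := by rw [hBZ]; push_cast; ring_nf
    rw [Finset.sum_Ioc_succ_top (Nat.zero_le K), ← hsplit,
      Finset.sum_congr rfl hconst, Finset.sum_const, Nat.card_Ioc, nsmul_eq_mul]
    push_cast [hAB]
    rw [← hAZ] at ih
    push_cast at ih
    rw [show ⌊((K:ℝ) + 1) * α⌋ = (B:ℤ) from hBZ'.symm]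
    ring_nf
    ring_nf at ih
    linarith

lemma irr_moebius (a : ℝ) (h : Irrational a) (p q r s : ℚ) (hd : p * s - q * r ≠ 0)
    (hden : (r : ℝ) * a + s ≠ 0) : Irrational (((p : ℝ) * a + q) / ((r : ℝ) * a + s)) := by
  rintro ⟨t, ht⟩
  rw [eq_div_iff hden] at ht
  by_cases hpr : p - t * r = 0
  · have hpr' : (p : ℝ) = t * r := by
      have : ((p - t * r : ℚ) : ℝ) = 0 := by rw [hpr]; simp
      push_cast at this; linarith
    have hq : (q : ℝ) = t * s := by linear_combination -ht - a * hpr'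
    apply hd
    have : ((p * s - q * r : ℚ) : ℝ) = 0 := by push_cast; rw [hpr', hq]; ring
    exact_mod_cast this
  · apply h
    refine ⟨(t * s - q) / (p - t * r), ?_⟩
    push_cast
    rw [div_eq_iff (by exact_mod_cast sub_ne_zero.mpr (fun hh => hpr (by rw [hh]; ring)) : ((p:ℝ) - t * r) ≠ 0)]
    linear_combination ht

lemma sum_odd_sq (k : ℕ) : ∑ x ∈ Finset.range k, (2 * (x:ℤ) + 1) = (k:ℤ)^2 := by
  induction k with
  | zero => simp
  | succ k ih => rw [Finset.sum_range_succ, ih]; push_cast; ring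

lemma gauss2 (k : ℕ) : 2 * ∑ i ∈ Finset.Ioc 0 k, (i:ℤ) = (k:ℤ) * (k+1) := by
  induction k with
  | zero => simp
  | succ k ih =>
    rw [Finset.sum_Ioc_succ_top (Nat.zero_le k), mul_add, ih]
    push_cast; ring

lemma floor_irr_sub (s : ℝ) (hs : Irrational s) (z : ℤ) :
    ⌊(z:ℝ) - s⌋ = z - ⌊s⌋ - 1 := by
  have hceil : ⌈s⌉ = ⌊s⌋ + 1 := by
    refine le_antisymm (Int.ceil_le_floor_add_one s) ?_
    have : ⌊s⌋ < ⌈s⌉ := by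
      rw [Int.lt_ceil]
      exact lt_of_le_of_ne (Int.floor_le s) (fun h => (hs.ne_int ⌊s⌋) h.symm)
    omega
  have h2 : (z:ℝ) - s = -s + z := by ring
  rw [h2, Int.floor_add_intCast, Int.floor_neg, hceil]
  ring

set_option maxHeartbeats 1000000 in
theorem stmt_3 (a : ℝ) (ha0 : 0 < a) (ha1 : a < 1) (hirr : Irrational a)
    (n m : ℕ) (hm : m ≤ 2 * n) :
    ({p : ℕ × ℕ | p.2 ≤ 2 * p.1 ∧
        (1 - a) * p.1 + a * p.2 ≤ (1 - a) * n + a * m}.ncard : ℤ)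
      = ((n : ℤ) ^ 2 + m
          - ∑ k ∈ Finset.Icc 1 (2 * n - m), ⌊(k : ℝ) * a / (1 + a)⌋
          + ∑ k ∈ Finset.Icc 1 m, ⌊(k : ℝ) * a / (1 - a)⌋) + 1 := by
  have ha1' : (0:ℝ) < 1 - a := by linarith
  have ha2 : (0:ℝ) < 1 + a := by linarith
  set N' : ℕ := 2 * n - m with hN'
  have hN'Z : (N' : ℤ) = 2 * (n:ℤ) - m := by rw [hN']; push_cast [hm]; ring
  have hN'R : (N' : ℝ) = 2 * (n:ℝ) - m := by rw [hN']; push_cast [hm]; ring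
  set c : ℝ := (1 - a) * n + a * m with hc
  set α₁ : ℝ := a / (1 - a) with hα₁def
  set α₂ : ℝ := a / (1 + a) with hα₂def
  set β : ℝ := (1 - a) / a with hβdef
  have hα₁pos : 0 < α₁ := div_pos ha0 ha1'
  have hα₂pos : 0 < α₂ := div_pos ha0 ha2
  have hβpos : 0 < β := div_pos ha1' ha0
  have hirrα₁ : Irrational α₁ := by
    have := irr_moebius a hirr 1 0 (-1) 1 (by norm_num) (by push_cast; intro h; apply ne_of_gt ha1'; linarith)
    convert this using 2 <;> push_cast <;> ring
  have hirrα₂ : Irrational α₂ := by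
    have := irr_moebius a hirr 1 0 1 1 (by norm_num) (by push_cast; intro h; apply ne_of_gt ha2; linarith)
    convert this using 2 <;> push_cast <;> ring
  have hirrβ : Irrational β := by
    have := irr_moebius a hirr (-1) 1 1 0 (by norm_num) (by push_cast; intro h; apply ne_of_gt ha0; linarith)
    convert this using 2 <;> push_cast <;> ring
  -- L and M
  have hLf : (0:ℤ) ≤ ⌊(N':ℝ) * α₂⌋ := Int.floor_nonneg.2 (by positivity)
  have hMf : (0:ℤ) ≤ ⌊(m:ℝ) * α₁⌋ := Int.floor_nonneg.2 (by positivity)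
  set L : ℕ := (⌊(N':ℝ) * α₂⌋).toNat with hLdef
  set M : ℕ := (⌊(m:ℝ) * α₁⌋).toNat with hMdef
  have hLZ : (L:ℤ) = ⌊(N':ℝ) * α₂⌋ := Int.toNat_of_nonneg hLf
  have hMZ : (M:ℤ) = ⌊(m:ℝ) * α₁⌋ := Int.toNat_of_nonneg hMf
  have hLle : (L:ℝ) ≤ (N':ℝ) * α₂ := by
    rw [show ((L:ℕ):ℝ) = ((L:ℤ):ℝ) by push_cast; ring, hLZ]; exact Int.floor_le _
  have hLlt : (N':ℝ) * α₂ < L + 1 := by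
    have := Int.lt_floor_add_one ((N':ℝ) * α₂)
    rw [← hLZ] at this; push_cast at this; linarith
  have hMle : (M:ℝ) ≤ (m:ℝ) * α₁ := by
    rw [show ((M:ℕ):ℝ) = ((M:ℤ):ℝ) by push_cast; ring, hMZ]; exact Int.floor_le _
  have hMlt : (m:ℝ) * α₁ < M + 1 := by
    have := Int.lt_floor_add_one ((m:ℝ) * α₁)
    rw [← hMZ] at this; push_cast at this; linarith
  have hN'le2n : (N':ℝ) ≤ 2 * n := by rw [hN'R]; have : (0:ℝ) ≤ m := Nat.cast_nonneg m; linarith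
  have hα₂a : α₂ * (1 + a) = a := by rw [hα₂def]; field_simp
  have hα₁a : α₁ * (1 - a) = a := by rw [hα₁def]; field_simp
  have hα₁β : α₁ * β = 1 := by rw [hα₁def, hβdef]; field_simp
  have ham : a * (m:ℝ) = (1-a) * ((m:ℝ) * α₁) := by rw [hα₁def]; field_simp
  have hP3 : (N':ℝ) * α₂ * (1+a) = a * N' := by rw [hα₂def]; field_simp
  have hP4 : a * (N':ℝ) = 2*a*(n:ℝ) - a*m := by rw [hN'R]; ring
  have hP5 : (m:ℝ) * α₁ * β = m := by rw [hα₁def, hβdef]; field_simp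
  have hLn : L ≤ n := by
    have hα₂lt : α₂ < 1/2 := by rw [hα₂def, div_lt_iff₀ ha2]; linarith
    have h2 : (N':ℝ) * α₂ ≤ n := by
      linarith [mul_nonneg (by linarith : (0:ℝ) ≤ 2*(n:ℝ) - N') hα₂pos.le,
        mul_nonneg (Nat.cast_nonneg (α := ℝ) n) (by linarith : (0:ℝ) ≤ 1 - 2*α₂)]
    have : (L:ℝ) ≤ n := le_trans hLle h2
    exact_mod_cast this
  have hnL : ((n - L : ℕ) : ℤ) = (n:ℤ) - L := by push_cast [hLn]; ring
  -- the per-x count function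
  set g : ℕ → ℕ := fun x => min (2*x) (⌊(c - (1-a)*(x:ℝ))/a⌋).toNat with hg
  set T : Finset (ℕ × ℕ) := (Finset.range (n + M + 1)).biUnion
      (fun x => ({x} : Finset ℕ) ×ˢ Finset.range (g x + 1)) with hT
  have hkey : ∀ x y : ℕ, (y ≤ 2*x ∧ (1-a)*(x:ℝ) + a*(y:ℝ) ≤ c) ↔ (x < n+M+1 ∧ y < g x + 1) := by
    intro x y
    constructor
    · rintro ⟨h1, h2⟩
      have hay : (0:ℝ) ≤ a * y := by positivity
      have hxlt : (x:ℝ) < (n:ℝ) + M + 1 := by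
        have hstep : (1-a) * (x:ℝ) < (1-a) * ((n:ℝ) + M + 1) := by
          linarith [h2, hay, hc.le, hc.ge, ham, mul_lt_mul_of_pos_left hMlt ha1']
        exact lt_of_mul_lt_mul_left hstep ha1'.le
      have hx' : x < n + M + 1 := by
        have : (x:ℝ) < ((n + M + 1 : ℕ):ℝ) := by push_cast; linarith
        exact_mod_cast this
      refine ⟨hx', ?_⟩
      have hfl : (y:ℤ) ≤ ⌊(c - (1-a)*(x:ℝ))/a⌋ := by
        rw [Int.le_floor]
        push_cast
        rw [le_div_iff₀ ha0]
        linarith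
      have hy2 : y ≤ (⌊(c - (1-a)*(x:ℝ))/a⌋).toNat := by
        rw [Int.le_toNat (le_trans (by positivity) hfl)]
        exact hfl
      have : y ≤ g x := by simp only [hg]; exact le_min h1 hy2
      omega
    · rintro ⟨hx, hy⟩
      have hy' : y ≤ g x := by omega
      simp only [hg] at hy'
      have h1 : y ≤ 2*x := le_trans hy' (min_le_left _ _)
      have hfl0 : (0:ℤ) ≤ ⌊(c - (1-a)*(x:ℝ))/a⌋ := by
        apply Int.floor_nonneg.2
        apply div_nonneg _ ha0.le
        have hxle : (x:ℝ) ≤ (n:ℝ) + M := by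
          have : x ≤ n + M := by omega
          have := (Nat.cast_le (α := ℝ)).2 this
          push_cast at this; linarith
        linarith [hc.le, hc.ge, ham,
          mul_le_mul_of_nonneg_left hMle ha1'.le,
          mul_le_mul_of_nonneg_left hxle ha1'.le]
      have h2 : (y:ℤ) ≤ ⌊(c - (1-a)*(x:ℝ))/a⌋ :=
        (Int.le_toNat hfl0).1 (le_trans hy' (min_le_right _ _))
      have h3 : (y:ℝ) ≤ (c - (1-a)*(x:ℝ))/a := by
        exact_mod_cast Int.le_floor.1 h2
      rw [le_div_iff₀ ha0] at h3
      exact ⟨h1, by linarith⟩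
  have hset : {p : ℕ × ℕ | (p.2:ℕ) ≤ 2 * p.1 ∧ (1 - a) * (p.1:ℝ) + a * (p.2:ℝ) ≤ c} = ↑T := by
    ext ⟨x, y⟩
    simp only [Set.mem_setOf_eq, Finset.coe_biUnion, Set.mem_iUnion, Finset.mem_coe,
      Finset.mem_range, Finset.mem_product, Finset.mem_singleton, hT, Finset.mem_biUnion]
    rw [hkey x y]
    constructor
    · rintro ⟨h1, h2⟩; exact ⟨x, h1, rfl, h2⟩
    · rintro ⟨x', hx', rfl, h2⟩; exact ⟨hx', h2⟩
  rw [hset, Set.ncard_coe_finset]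
  have hdisj : ∀ x ∈ Finset.range (n + M + 1), ∀ y ∈ Finset.range (n + M + 1), x ≠ y →
      Disjoint (({x} : Finset ℕ) ×ˢ Finset.range (g x + 1)) (({y} : Finset ℕ) ×ˢ Finset.range (g y + 1)) := by
    intro x _ y _ hxy
    rw [Finset.disjoint_left]
    rintro ⟨u, v⟩ hu hv
    simp only [Finset.mem_product, Finset.mem_singleton] at hu hv
    exact hxy (hu.1 ▸ hv.1 ▸ rfl)
  have hcard : (T.card : ℤ) = ∑ x ∈ Finset.range (n + M + 1), ((g x : ℤ) + 1) := by
    rw [hT, Finset.card_biUnion hdisj]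
    push_cast
    apply Finset.sum_congr rfl
    intro x _
    rw [Finset.card_product, Finset.card_singleton, Finset.card_range]
    push_cast; ring
  rw [hcard]
  -- split the sum
  have hsplit1 : ∑ x ∈ Finset.range (n + M + 1), ((g x : ℤ) + 1)
      = ∑ x ∈ Finset.Ico 0 (n - L), ((g x : ℤ) + 1)
        + ∑ x ∈ Finset.Ico (n - L) (n + 1), ((g x : ℤ) + 1)
        + ∑ x ∈ Finset.Ico (n + 1) (n + M + 1), ((g x : ℤ) + 1) := by
    rw [Finset.range_eq_Ico,
      ← Finset.sum_Ico_consecutive _ (Nat.zero_le (n+1)) (by omega : n + 1 ≤ n + M + 1),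
      ← Finset.sum_Ico_consecutive _ (Nat.zero_le (n - L)) (by omega : n - L ≤ n + 1)]
  rw [hsplit1]
  -- piece 1
  have e1 : ∑ x ∈ Finset.Ico 0 (n - L), ((g x : ℤ) + 1) = ((n:ℤ) - L)^2 := by
    have key1 : ∀ x ∈ Finset.Ico 0 (n - L), ((g x : ℤ) + 1) = 2*(x:ℤ) + 1 := by
      intro x hx
      rw [Finset.mem_Ico] at hx
      have hxn : (x:ℝ) + L + 1 ≤ n := by
        have : x + L + 1 ≤ n := by omega
        have := (Nat.cast_le (α := ℝ)).2 this
        push_cast at this; linarith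
      have hfl : (2*(x:ℕ):ℤ) ≤ ⌊(c - (1-a)*(x:ℝ))/a⌋ := by
        rw [Int.le_floor]
        push_cast
        rw [le_div_iff₀ ha0]
        rw [hc]
        linarith [mul_le_mul_of_nonneg_right hxn ha2.le,
          mul_lt_mul_of_pos_right hLlt ha2, hP3, hP4]
      have : g x = 2 * x := by
        simp only [hg]
        rw [min_eq_left]
        rw [Int.le_toNat (le_trans (by positivity) hfl)]
        exact hfl
      rw [this]; push_cast; ring
    rw [Finset.sum_congr rfl key1]
    rw [show Finset.Ico 0 (n - L) = Finset.range (n - L) from by rw [Finset.range_eq_Ico]]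
    rw [sum_odd_sq, hnL]

  -- pointwise value on middle range
  have key2 : ∀ x ∈ Finset.Ico (n - L) (n + 1), ((g x : ℤ)) = (m:ℤ) + ⌊((n:ℝ) - x)*β⌋ := by
    intro x hx
    rw [Finset.mem_Ico] at hx
    have hxn : x ≤ n := by omega
    have hxnL : n - L ≤ x := hx.1
    have hxR : (n:ℝ) - L ≤ x := by
      have h' := (Nat.cast_le (α := ℝ)).2 hxnL
      push_cast [hLn] at h'
      linarith
    have hs0 : (0:ℝ) ≤ ((n:ℝ) - x)*β := by
      have : (x:ℝ) ≤ n := by exact_mod_cast hxn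
      have := sub_nonneg.2 this
      positivity
    have hval : (c - (1-a)*(x:ℝ))/a = (m:ℝ) + ((n:ℝ) - x)*β := by
      rw [hc, hβdef]; field_simp; ring
    have hfloor : ⌊(c - (1-a)*(x:ℝ))/a⌋ = (m:ℤ) + ⌊((n:ℝ) - x)*β⌋ := by
      rw [hval, show (m:ℝ) + ((n:ℝ) - x)*β = ((n:ℝ) - x)*β + ((m:ℤ):ℝ) by push_cast; ring,
        Int.floor_add_intCast]
      ring
    have hfl0 : (0:ℤ) ≤ ⌊(c - (1-a)*(x:ℝ))/a⌋ := by
      rw [hfloor]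
      have := Int.floor_nonneg.2 hs0
      positivity
    have hle2x : ⌊(c - (1-a)*(x:ℝ))/a⌋ ≤ 2*(x:ℤ) := by
      rw [hfloor]
      have hslt : ((n:ℝ) - x)*β < ((2*(x:ℤ) - m + 1 : ℤ):ℝ) := by
        push_cast
        rw [hβdef]
        rw [← mul_div_assoc, div_lt_iff₀ ha0]
        linarith [mul_le_mul_of_nonneg_right hxR ha2.le,
          mul_le_mul_of_nonneg_right hLle ha2.le, hP3, hP4, ha0]
      have := Int.floor_lt.2 hslt
      omega
    have : (g x : ℤ) = min (2*(x:ℕ):ℤ) ((⌊(c - (1-a)*(x:ℝ))/a⌋).toNat : ℤ) := by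
      simp only [hg]; push_cast; ring_nf
    rw [this, Int.toNat_of_nonneg hfl0]
    rw [min_eq_right (by exact_mod_cast hle2x)]
    exact hfloor
  -- piece 2
  have e2 : ∑ x ∈ Finset.Ico (n - L) (n + 1), ((g x : ℤ) + 1)
      = ((L:ℤ) + 1) * (m + 1) + ∑ j ∈ Finset.Ioc 0 L, ⌊(j:ℝ) * β⌋ := by
    have hre : ∑ x ∈ Finset.Ico (n - L) (n + 1), ((g x : ℤ) + 1)
        = ∑ j ∈ Finset.Icc 0 L, ((m:ℤ) + 1 + ⌊(j:ℝ) * β⌋) := by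
      apply Finset.sum_nbij' (i := fun x => n - x) (j := fun j => n - j)
      · intro x hx
        rw [Finset.mem_Ico] at hx
        rw [Finset.mem_Icc]
        omega
      · intro j hj
        rw [Finset.mem_Icc] at hj
        rw [Finset.mem_Ico]
        omega
      · intro x hx
        rw [Finset.mem_Ico] at hx
        omega
      · intro j hj
        rw [Finset.mem_Icc] at hj
        omega
      · intro x hx
        rw [Finset.mem_Ico] at hx
        rw [key2 x (by rw [Finset.mem_Ico]; exact hx)]
        have : ((n - x : ℕ) : ℝ) = (n:ℝ) - x := by
          push_cast [show x ≤ n by omega]; try ring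
        rw [this]
        ring
    rw [hre]
    have hins : Finset.Icc 0 L = insert 0 (Finset.Ioc 0 L) := by
      ext t; simp only [Finset.mem_Icc, Finset.mem_Ioc, Finset.mem_insert]; omega
    rw [hins, Finset.sum_insert (by simp), Finset.sum_add_distrib]
    simp only [Finset.sum_const, Nat.card_Ioc, Nat.sub_zero, nsmul_eq_mul,
      Nat.cast_zero, zero_mul, Int.floor_zero]
    push_cast
    ring
  -- piece 3
  have key3 : ∀ x ∈ Finset.Ico (n + 1) (n + M + 1), ((g x : ℤ) + 1) = (m:ℤ) - ⌊((x:ℝ) - n)*β⌋ := by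
    intro x hx
    rw [Finset.mem_Ico] at hx
    have hj1 : 1 ≤ x - n := by omega
    have hjM : x - n ≤ M := by omega
    have hcast : ((x - n : ℕ) : ℝ) = (x:ℝ) - n := by
      push_cast [show n ≤ x by omega]; try ring
    have hirrs : Irrational (((x - n : ℕ)) * β) := hirrβ.natCast_mul (by omega)
    rw [hcast] at hirrs
    have hval : (c - (1-a)*(x:ℝ))/a = (m:ℝ) - ((x:ℝ) - n)*β := by
      rw [hc, hβdef]; field_simp; ring
    have hfloor : ⌊(c - (1-a)*(x:ℝ))/a⌋ = (m:ℤ) - ⌊((x:ℝ) - n)*β⌋ - 1 := by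
      rw [hval, show (m:ℝ) - ((x:ℝ) - n)*β = ((m:ℤ):ℝ) - ((x:ℝ) - n)*β by push_cast; ring]
      exact floor_irr_sub _ hirrs _
    have hm1 : 1 ≤ m := by
      by_contra hc0
      have hm0 : m = 0 := by omega
      have : M = 0 := by
        rw [hMdef, hm0]
        simp
      omega
    have hmα₁irr : Irrational ((m:ℝ) * α₁) := hirrα₁.natCast_mul (by omega)
    have hMlt' : (M:ℝ) < (m:ℝ) * α₁ :=
      lt_of_le_of_ne hMle (fun h => hmα₁irr ⟨(M:ℚ), by push_cast; exact_mod_cast h⟩)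
    have hslt : ((x:ℝ) - n)*β < m := by
      have hxM : (x:ℝ) - n ≤ M := by
        have := (Nat.cast_le (α := ℝ)).2 hjM
        rw [hcast] at this; exact this
      have h1 : ((x:ℝ) - n) < (m:ℝ) * α₁ := lt_of_le_of_lt hxM hMlt'
      linarith [hP5, mul_lt_mul_of_pos_right h1 hβpos]
    have hflslt : ⌊((x:ℝ) - n)*β⌋ ≤ (m:ℤ) - 1 := by
      have := Int.floor_lt.2 (show ((x:ℝ) - n)*β < ((m:ℤ):ℝ) by push_cast; linarith)
      omega
    have hs0 : (0:ℝ) ≤ ((x:ℝ) - n)*β := by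
      have : (n:ℝ) ≤ x := by
        have := (Nat.cast_le (α := ℝ)).2 (show n ≤ x by omega)
        exact this
      have := sub_nonneg.2 this
      positivity
    have hfl0 : (0:ℤ) ≤ ⌊(c - (1-a)*(x:ℝ))/a⌋ := by
      rw [hfloor]
      have := Int.floor_nonneg.2 hs0
      omega
    have hle2x : ⌊(c - (1-a)*(x:ℝ))/a⌋ ≤ 2*(x:ℤ) := by
      rw [hfloor]
      have h0 : (0:ℤ) ≤ ⌊((x:ℝ) - n)*β⌋ := Int.floor_nonneg.2 hs0
      have : (m:ℤ) ≤ 2*n := by exact_mod_cast hm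
      have hxn : (n:ℤ) + 1 ≤ x := by exact_mod_cast hx.1
      omega
    have hgx : (g x : ℤ) = min (2*(x:ℕ):ℤ) ((⌊(c - (1-a)*(x:ℝ))/a⌋).toNat : ℤ) := by
      simp only [hg]; push_cast; ring_nf
    rw [hgx, Int.toNat_of_nonneg hfl0, min_eq_right (by exact_mod_cast hle2x), hfloor]
    ring
  have e3 : ∑ x ∈ Finset.Ico (n + 1) (n + M + 1), ((g x : ℤ) + 1)
      = (M:ℤ) * m - ∑ j ∈ Finset.Ioc 0 M, ⌊(j:ℝ) * β⌋ := by
    have hre : ∑ x ∈ Finset.Ico (n + 1) (n + M + 1), ((g x : ℤ) + 1)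
        = ∑ j ∈ Finset.Ioc 0 M, ((m:ℤ) - ⌊(j:ℝ) * β⌋) := by
      apply Finset.sum_nbij' (i := fun x => x - n) (j := fun j => n + j)
      · intro x hx
        rw [Finset.mem_Ico] at hx
        rw [Finset.mem_Ioc]
        omega
      · intro j hj
        rw [Finset.mem_Ioc] at hj
        rw [Finset.mem_Ico]
        omega
      · intro x hx
        rw [Finset.mem_Ico] at hx
        omega
      · intro j hj
        rw [Finset.mem_Ioc] at hj
        omega
      · intro x hx
        rw [key3 x hx]
        have : ((x - n : ℕ) : ℝ) = (x:ℝ) - n := by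
          rw [Finset.mem_Ico] at hx
          push_cast [show n ≤ x by omega]; try ring
        rw [this]
    rw [hre, Finset.sum_sub_distrib]
    simp only [Finset.sum_const, Nat.card_Ioc, Nat.sub_zero, nsmul_eq_mul]
    try ring
  rw [e1, e2, e3]
  -- reciprocity consequences
  have hIcc : ∀ K : ℕ, Finset.Icc 1 K = Finset.Ioc 0 K := by
    intro K; ext t; simp only [Finset.mem_Icc, Finset.mem_Ioc]; omega
  have R1 : ∑ k ∈ Finset.Icc 1 m, ⌊(k : ℝ) * a / (1 - a)⌋ + ∑ j ∈ Finset.Ioc 0 M, ⌊(j:ℝ) * β⌋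
      = (m:ℤ) * M := by
    have hr := recip α₁ hα₁pos hirrα₁ m
    rw [← hMdef] at hr
    have hc1 : ∑ k ∈ Finset.Ioc 0 m, ⌊(k : ℝ) * α₁⌋ = ∑ k ∈ Finset.Icc 1 m, ⌊(k : ℝ) * a / (1 - a)⌋ := by
      rw [hIcc]
      apply Finset.sum_congr rfl
      intro k _
      congr 1
      rw [hα₁def]; ring
    have hc2 : ∑ j ∈ Finset.Ioc 0 M, ⌊(j : ℝ) / α₁⌋ = ∑ j ∈ Finset.Ioc 0 M, ⌊(j:ℝ) * β⌋ := by
      apply Finset.sum_congr rfl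
      intro j _
      congr 1
      rw [hα₁def, hβdef]; field_simp
    rw [hc1, hc2, ← hMZ] at hr
    exact hr
  have R2 : ∑ k ∈ Finset.Icc 1 N', ⌊(k : ℝ) * a / (1 + a)⌋ + ∑ j ∈ Finset.Ioc 0 L, ⌊(j:ℝ) * β⌋
      + (L:ℤ) * (L + 1) = (N':ℤ) * L := by
    have hr := recip α₂ hα₂pos hirrα₂ N'
    rw [← hLdef] at hr
    have hc1 : ∑ k ∈ Finset.Ioc 0 N', ⌊(k : ℝ) * α₂⌋ = ∑ k ∈ Finset.Icc 1 N', ⌊(k : ℝ) * a / (1 + a)⌋ := by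
      rw [hIcc]
      apply Finset.sum_congr rfl
      intro k _
      congr 1
      rw [hα₂def]; ring
    have hc2 : ∑ j ∈ Finset.Ioc 0 L, ⌊(j : ℝ) / α₂⌋
        = ∑ j ∈ Finset.Ioc 0 L, (⌊(j:ℝ) * β⌋ + 2*(j:ℤ)) := by
      apply Finset.sum_congr rfl
      intro j _
      rw [show (j:ℝ)/α₂ = (j:ℝ)*β + ((2*(j:ℕ) : ℤ):ℝ) by
        push_cast; rw [hα₂def, hβdef]; field_simp; ring]
      rw [Int.floor_add_intCast]
      try (push_cast; ring)
    rw [hc1, hc2, Finset.sum_add_distrib, ← Finset.mul_sum, ← hLZ] at hr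
    have hg2 := gauss2 L
    linarith [hr, hg2]
  have hnL : ((n - L : ℕ) : ℤ) = (n:ℤ) - L := by push_cast [hLn]; ring
  linear_combination -R1 + R2 + ((L:ℤ)) * hN'Z
end

section
/- Define g(m₁, m₂) = (m₁+m₂)/2 - m₁²/4 + m₁m₂/2 - m₂²/4 + Σ_{k=1}^{m₁} ⌊k/(1+a)⌋ + Σ_{k=1}^{m₂} ⌊k/(1-a)⌋ for nonnegative integers m₁, m₂ with m₁ + m₂ even, and a ∈ (0,1) irrational. Then, under the substitution n = (m₁+m₂)/2, m = m₂, one has g(m₁,m₂) = n² + m - Σ_{k=1}^{2n-m} ⌊k·a/(1+a)⌋ + Σ_{k=1}^{m} ⌊k·a/(1-a)⌋. In particular g(m₁,m₂) is a nonnegative integer. -/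
lemma gauss_icc (m : ℕ) : (∑ k ∈ Finset.Icc 1 m, (k : ℚ)) = m * (m + 1) / 2 := by
  induction m with
  | zero => simp
  | succ n ih =>
    rw [Finset.sum_Icc_succ_top (by omega : 1 ≤ n + 1), ih]
    push_cast
    ring

theorem stmt_6 (a : ℝ) (ha0 : 0 < a) (ha1 : a < 1) (hirr : Irrational a)
    (m₁ m₂ : ℕ) (heven : Even (m₁ + m₂)) :
    ((m₁ + m₂ : ℚ) / 2 - (m₁ : ℚ) ^ 2 / 4 + (m₁ : ℚ) * m₂ / 2 - (m₂ : ℚ) ^ 2 / 4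
        + (∑ k ∈ Finset.Icc 1 m₁, ⌊(k : ℝ) / (1 + a)⌋ : ℤ)
        + (∑ k ∈ Finset.Icc 1 m₂, ⌊(k : ℝ) / (1 - a)⌋ : ℤ))
      = ((((m₁ + m₂) / 2 : ℕ) : ℚ) ^ 2 + (m₂ : ℚ)
          - (∑ k ∈ Finset.Icc 1 (2 * ((m₁ + m₂) / 2) - m₂), ⌊(k : ℝ) * a / (1 + a)⌋ : ℤ)
          + (∑ k ∈ Finset.Icc 1 m₂, ⌊(k : ℝ) * a / (1 - a)⌋ : ℤ))
    ∧ 0 ≤ ((m₁ + m₂ : ℚ) / 2 - (m₁ : ℚ) ^ 2 / 4 + (m₁ : ℚ) * m₂ / 2 - (m₂ : ℚ) ^ 2 / 4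
        + (∑ k ∈ Finset.Icc 1 m₁, ⌊(k : ℝ) / (1 + a)⌋ : ℤ)
        + (∑ k ∈ Finset.Icc 1 m₂, ⌊(k : ℝ) / (1 - a)⌋ : ℤ)) := by
  obtain ⟨n, hn⟩ := heven
  have hn2 : m₁ + m₂ = 2 * n := by omega
  have hd : (m₁ + m₂) / 2 = n := by omega
  have hm1 : 2 * ((m₁ + m₂) / 2) - m₂ = m₁ := by omega
  rw [hd, show 2 * n - m₂ = m₁ from by omega]
  have h1a : (0:ℝ) < 1 + a := by linarith
  have h1a' : (0:ℝ) < 1 - a := by linarith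
  -- key floor identities
  have key1 : ∀ k : ℕ, 1 ≤ k →
      ⌊(k : ℝ) / (1 + a)⌋ = (k : ℤ) - 1 - ⌊(k : ℝ) * a / (1 + a)⌋ := by
    intro k hk
    set x : ℝ := (k : ℝ) * a / (1 + a) with hxdef
    have hxirr : Irrational x := by
      have h1 : Irrational (1 + a) := by simpa using hirr.ratCast_add (q := 1)
      have h2 : Irrational ((1 + a)⁻¹) := h1.inv
      have h3 : Irrational (a / (1 + a)) := by
        have he : a / (1 + a) = 1 - (1 + a)⁻¹ := by field_simp; ring
        rw [he]
        simpa using h2.ratCast_sub (q := 1)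
      have h4 : Irrational ((k : ℝ) * (a / (1 + a))) := h3.natCast_mul (by omega)
      have he2 : x = (k : ℝ) * (a / (1 + a)) := by rw [hxdef]; ring
      rwa [he2]
    have hrw : (k : ℝ) / (1 + a) = -x + (k : ℕ) := by
      rw [hxdef]; field_simp; ring
    rw [hrw, Int.floor_add_natCast, Int.floor_neg]
    have hne : x ≠ (⌊x⌋ : ℝ) := hxirr.ne_int ⌊x⌋
    have hlt : (⌊x⌋ : ℝ) < x := lt_of_le_of_ne (Int.floor_le x) (Ne.symm hne)
    have hceil1 : ⌊x⌋ + 1 ≤ ⌈x⌉ := Int.lt_ceil.mpr hlt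
    have hceil2 : ⌈x⌉ ≤ ⌊x⌋ + 1 := Int.ceil_le_floor_add_one x
    omega
  have key2 : ∀ k : ℕ,
      ⌊(k : ℝ) / (1 - a)⌋ = (k : ℤ) + ⌊(k : ℝ) * a / (1 - a)⌋ := by
    intro k
    have hrw : (k : ℝ) / (1 - a) = (k : ℝ) * a / (1 - a) + (k : ℕ) := by
      field_simp; ring
    rw [hrw, Int.floor_add_natCast]
    omega
  have e1 : (∑ k ∈ Finset.Icc 1 m₁, ⌊(k : ℝ) / (1 + a)⌋)
      = (∑ k ∈ Finset.Icc 1 m₁, ((k : ℤ) - 1))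
        - ∑ k ∈ Finset.Icc 1 m₁, ⌊(k : ℝ) * a / (1 + a)⌋ := by
    rw [← Finset.sum_sub_distrib]
    exact Finset.sum_congr rfl fun k hk => by
      have := key1 k (Finset.mem_Icc.mp hk).1; omega
  have e2 : (∑ k ∈ Finset.Icc 1 m₂, ⌊(k : ℝ) / (1 - a)⌋)
      = (∑ k ∈ Finset.Icc 1 m₂, (k : ℤ))
        + ∑ k ∈ Finset.Icc 1 m₂, ⌊(k : ℝ) * a / (1 - a)⌋ := by
    rw [← Finset.sum_add_distrib]
    exact Finset.sum_congr rfl fun k _ => key2 k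
  set S1 := ∑ k ∈ Finset.Icc 1 m₁, ⌊(k : ℝ) * a / (1 + a)⌋ with hS1
  set S2 := ∑ k ∈ Finset.Icc 1 m₂, ⌊(k : ℝ) * a / (1 - a)⌋ with hS2
  have c1 : ((∑ k ∈ Finset.Icc 1 m₁, ((k : ℤ) - 1) : ℤ) : ℚ)
      = (m₁ : ℚ) * (m₁ + 1) / 2 - m₁ := by
    push_cast
    rw [Finset.sum_sub_distrib, gauss_icc]
    simp [Nat.card_Icc]
  have c2 : ((∑ k ∈ Finset.Icc 1 m₂, (k : ℤ) : ℤ) : ℚ)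
      = (m₂ : ℚ) * (m₂ + 1) / 2 := by
    push_cast
    exact gauss_icc m₂
  have hnq : (m₁ : ℚ) + m₂ = 2 * n := by exact_mod_cast congrArg (Nat.cast : ℕ → ℚ) hn2
  constructor
  · rw [e1, e2]
    push_cast [c1, c2]
    linear_combination ((n : ℚ) / 2 + (m₁ : ℚ) / 4 + (m₂ : ℚ) / 4) * hnq
  · rw [e1, e2]
    have hS1b : ∀ k ∈ Finset.Icc 1 m₁, 2 * ⌊(k : ℝ) * a / (1 + a)⌋ ≤ (k : ℤ) - 1 := by
      intro k hk
      have hk1 : 1 ≤ k := (Finset.mem_Icc.mp hk).1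
      have hkr : (1 : ℝ) ≤ (k : ℝ) := by exact_mod_cast hk1
      have hlt : (k : ℝ) * a / (1 + a) < (k : ℝ) / 2 := by
        rw [div_lt_div_iff₀ h1a (by norm_num : (0:ℝ) < 2)]
        nlinarith
      have h2 : ((2 * ⌊(k : ℝ) * a / (1 + a)⌋ : ℤ) : ℝ) < (k : ℝ) := by
        push_cast
        have := Int.floor_le ((k : ℝ) * a / (1 + a))
        linarith
      have h3 : (2 * ⌊(k : ℝ) * a / (1 + a)⌋ : ℤ) < (k : ℤ) := by exact_mod_cast h2
      omega
    have hS1sum : 2 * S1 ≤ ∑ k ∈ Finset.Icc 1 m₁, ((k : ℤ) - 1) := by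
      rw [hS1, Finset.mul_sum]
      exact Finset.sum_le_sum hS1b
    have hS1q : 2 * (S1 : ℚ) ≤ (m₁ : ℚ) * (m₁ + 1) / 2 - m₁ := by
      calc 2 * (S1 : ℚ) = ((2 * S1 : ℤ) : ℚ) := by push_cast; ring
        _ ≤ ((∑ k ∈ Finset.Icc 1 m₁, ((k : ℤ) - 1) : ℤ) : ℚ) := by exact_mod_cast hS1sum
        _ = (m₁ : ℚ) * (m₁ + 1) / 2 - m₁ := c1
    have hS2q : (0 : ℚ) ≤ (S2 : ℚ) := by
      have h0 : (0 : ℤ) ≤ S2 := Finset.sum_nonneg fun k _ =>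
        Int.floor_nonneg.mpr (by positivity)
      exact_mod_cast h0
    have hm2nn : (0 : ℚ) ≤ (m₂ : ℚ) := Nat.cast_nonneg m₂
    push_cast [c1, c2]
    nlinarith [sq_nonneg ((m₁ : ℚ) - 2 * n), Nat.cast_nonneg (α := ℚ) m₁]
end

section
/- Let a ∈ (0,1) be irrational. The map (m₁,m₂) ↦ (m₁+m₂)/2 - m₁²/4 + m₁m₂/2 - m₂²/4 + Σ_{k=1}^{m₁} ⌊k/(1+a)⌋ + Σ_{k=1}^{m₂} ⌊k/(1-a)⌋, defined on pairs of nonnegative integers (m₁,m₂) with m₁+m₂ even, is a bijection onto the nonnegative integers. -/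
open Finset


lemma ceil_irr (x : ℝ) (h : Irrational x) : ⌈x⌉ = ⌊x⌋ + 1 := by
  refine le_antisymm (Int.ceil_le_floor_add_one x) ?_
  have h1 : (⌊x⌋ : ℝ) ≠ x := fun he => h.ne_int ⌊x⌋ he.symm
  have h2 : (⌊x⌋ : ℝ) < x := lt_of_le_of_ne (Int.floor_le x) h1
  have : (⌊x⌋ : ℝ) < ⌈x⌉ := lt_of_lt_of_le h2 (Int.le_ceil x)
  exact_mod_cast Int.add_one_le_iff.mpr (by exact_mod_cast this)

lemma card_filter_int {α} (s : Finset α) (p : α → Prop) [DecidablePred p] :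
    ((s.filter p).card : ℤ) = ∑ x ∈ s, (if p x then (1:ℤ) else 0) := by
  rw [Finset.card_filter]
  push_cast
  rfl

lemma sumfloor (b : ℝ) (hb : 0 < b) (hbi : Irrational b) (m J : ℕ) (hJ : (m:ℝ) ≤ J * b) :
    ∑ k ∈ Icc 1 m, ⌊(k:ℝ)/b⌋ = ∑ j ∈ Icc 1 J, max 0 ((m:ℤ) - ⌊(j:ℝ)*b⌋) := by
  have step1 : ∀ k ∈ Icc 1 m, ⌊(k:ℝ)/b⌋ =
      (((Icc 1 J).filter (fun j : ℕ => (j:ℝ)*b ≤ (k:ℝ))).card : ℤ) := by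
    intro k hk
    have hfil : (Icc 1 J).filter (fun j : ℕ => (j:ℝ)*b ≤ (k:ℝ)) = Icc 1 (⌊(k:ℝ)/b⌋.toNat) := by
      have hkb : (0:ℝ) ≤ (k:ℝ)/b := by positivity
      have hfl0 : 0 ≤ ⌊(k:ℝ)/b⌋ := Int.floor_nonneg.mpr hkb
      have hflJ : ⌊(k:ℝ)/b⌋ ≤ (J:ℤ) := by
        have hle : (k:ℝ)/b ≤ (J:ℝ) := by
          rw [div_le_iff₀ hb]
          calc (k:ℝ) ≤ m := by exact_mod_cast (mem_Icc.mp hk).2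
            _ ≤ J * b := hJ
        calc ⌊(k:ℝ)/b⌋ ≤ ⌊(J:ℝ)⌋ := Int.floor_le_floor hle
          _ = (J:ℤ) := Int.floor_natCast J
      ext j
      simp only [mem_filter, mem_Icc]
      constructor
      · rintro ⟨⟨h1, h2⟩, h3⟩
        refine ⟨h1, ?_⟩
        have : (j:ℤ) ≤ ⌊(k:ℝ)/b⌋ := Int.le_floor.mpr (by rw [le_div_iff₀ hb]; push_cast; linarith)
        omega
      · rintro ⟨h1, h2⟩
        have hj : (j:ℤ) ≤ ⌊(k:ℝ)/b⌋ := by omega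
        refine ⟨⟨h1, by omega⟩, ?_⟩
        have := Int.le_floor.mp hj
        rw [le_div_iff₀ hb] at this
        push_cast at this ⊢
        linarith
    rw [hfil, Nat.card_Icc]
    have : (0:ℝ) ≤ (k:ℝ)/b := by positivity
    have := Int.floor_nonneg.mpr this
    omega
  calc ∑ k ∈ Icc 1 m, ⌊(k:ℝ)/b⌋
      = ∑ k ∈ Icc 1 m, ∑ j ∈ Icc 1 J, (if (j:ℝ)*b ≤ (k:ℝ) then (1:ℤ) else 0) := by
        refine Finset.sum_congr rfl fun k hk => ?_
        rw [step1 k hk, card_filter_int]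
    _ = ∑ j ∈ Icc 1 J, ∑ k ∈ Icc 1 m, (if (j:ℝ)*b ≤ (k:ℝ) then (1:ℤ) else 0) :=
        Finset.sum_comm
    _ = ∑ j ∈ Icc 1 J, max 0 ((m:ℤ) - ⌊(j:ℝ)*b⌋) := by
        refine Finset.sum_congr rfl fun j hj => ?_
        rw [← card_filter_int]
        have hj1 : 1 ≤ j := (mem_Icc.mp hj).1
        have hjb : (0:ℝ) < (j:ℝ)*b := by positivity
        have hirrjb : Irrational ((j:ℝ)*b) := by
          have h2 := hbi.intCast_mul (show (j:ℤ) ≠ 0 by exact_mod_cast Nat.one_le_iff_ne_zero.mp hj1)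
          have : ((j:ℤ):ℝ) = (j:ℝ) := by push_cast; rfl
          rwa [this] at h2
        have hfl0 : 0 ≤ ⌊(j:ℝ)*b⌋ := Int.floor_nonneg.mpr hjb.le
        have hfil : (Icc 1 m).filter (fun k : ℕ => (j:ℝ)*b ≤ (k:ℝ)) = Icc (⌊(j:ℝ)*b⌋.toNat + 1) m := by
          ext k
          simp only [mem_filter, mem_Icc]
          constructor
          · rintro ⟨⟨h1, h2⟩, h3⟩
            refine ⟨?_, h2⟩
            have : ⌈(j:ℝ)*b⌉ ≤ (k:ℤ) := Int.ceil_le.mpr (by exact_mod_cast h3)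
            rw [ceil_irr _ hirrjb] at this
            omega
          · rintro ⟨h1, h2⟩
            have h4 : ⌊(j:ℝ)*b⌋ + 1 ≤ (k:ℤ) := by omega
            rw [← ceil_irr _ hirrjb] at h4
            have h5 : ((⌈(j:ℝ)*b⌉:ℤ):ℝ) ≤ (k:ℝ) := by exact_mod_cast h4
            have := le_trans (Int.le_ceil ((j:ℝ)*b)) h5
            exact ⟨⟨by omega, h2⟩, this⟩
        rw [hfil, Nat.card_Icc]
        omega


lemma qsum (n : ℕ) : ∑ j ∈ Icc 1 n, (2*((n:ℤ)+1-j)) = ((n:ℤ)+1)^2 - ((n:ℤ)+1) := by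
  induction n with
  | zero => simp
  | succ n ih =>
    rw [Finset.sum_Icc_succ_top (by omega)]
    push_cast
    have : ∀ j ∈ Icc 1 n, (2*((n:ℤ)+1+1-j)) = 2*((n:ℤ)+1-j) + 2 := by intro j hj; push_cast; ring
    rw [Finset.sum_congr rfl this, Finset.sum_add_distrib, ih]
    simp [Nat.card_Icc]
    push_cast
    ring

lemma gsum (J : ℕ) (δ σ : ℤ) (t : ℕ → ℤ) (hδ0 : 0 ≤ δ) (hδσ : δ ≤ σ) (hδJ : δ ≤ (J:ℤ))
    (ht : ∀ j ∈ Icc 1 J, -(j:ℤ) ≤ t j) :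
    ∑ j ∈ Icc 1 J, (max 0 (σ + t j + 1 + δ - j) - max 0 (σ + t j + 1 - |δ - j|)) =
      δ^2 - δ := by
  have hterm : ∀ j ∈ Icc 1 J,
      (max 0 (σ + t j + 1 + δ - j) - max 0 (σ + t j + 1 - |δ - j|)) =
      (if (j:ℤ) < δ then 2*(δ - j) else 0) := by
    intro j hj
    rcases lt_or_ge (j:ℤ) δ with h | h
    · rw [if_pos h, abs_of_nonneg (by omega : (0:ℤ) ≤ δ - j)]
      have h1 := ht j hj
      have e1 : max 0 (σ + t j + 1 + δ - j) = σ + t j + 1 + δ - j := max_eq_right (by omega)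
      have e2 : max 0 (σ + t j + 1 - (δ - j)) = σ + t j + 1 - (δ - j) := max_eq_right (by omega)
      rw [e1, e2]; ring
    · rw [if_neg (by omega), abs_of_nonpos (by omega : δ - j ≤ 0)]
      ring_nf
  rw [Finset.sum_congr rfl hterm]
  set n : ℕ := δ.toNat with hn
  have hδn : δ = (n:ℤ) := by omega
  have hsub : Icc 1 (n-1) ⊆ Icc 1 J := Finset.Icc_subset_Icc le_rfl (by omega)
  rw [← Finset.sum_subset hsub ?_]
  · rcases Nat.eq_zero_or_pos n with h0 | h0
    · rw [hδn, h0]; simp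
    · have hm : n - 1 + 1 = n := by omega
      have : ∀ j ∈ Icc 1 (n-1), (if (j:ℤ) < δ then 2*(δ - j) else 0) = 2*(((n-1:ℕ):ℤ)+1-j) := by
        intro j hj
        simp only [mem_Icc] at hj
        rw [if_pos (by omega)]
        have : δ = ((n-1:ℕ):ℤ) + 1 := by omega
        rw [this]
      rw [Finset.sum_congr rfl this, qsum]
      have : δ = ((n-1:ℕ):ℤ) + 1 := by omega
      rw [this]
  · intro j hjJ hj
    simp only [mem_Icc] at hj hjJ
    rw [if_neg (by omega)]


lemma splitsym (g : ℤ → ℤ) (c : ℤ) (J : ℕ) :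
    ∑ d ∈ Icc (c - (J:ℤ)) (c + (J:ℤ)), g d = g c + ∑ j ∈ Icc 1 J, (g (c - j) + g (c + j)) := by
  induction J with
  | zero => simp
  | succ J ih =>
    have hset : Icc (c - ((J:ℤ)+1)) (c + ((J:ℤ)+1)) =
        insert (c - ((J:ℤ)+1)) (insert (c + ((J:ℤ)+1)) (Icc (c - (J:ℤ)) (c + (J:ℤ)))) := by
      ext d
      simp only [mem_Icc, mem_insert]
      omega
    push_cast
    rw [hset, Finset.sum_insert (by simp only [mem_insert, mem_Icc]; omega),
      Finset.sum_insert (by simp only [mem_Icc]; omega), ih,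
      Finset.sum_Icc_succ_top (by omega : 1 ≤ J + 1)]
    push_cast
    ring


noncomputable section
def vv (a : ℝ) (p : ℕ × ℕ) : ℝ := p.1 * (1 - a) + p.2 * (1 + a)
def lset (a : ℝ) (x : ℝ) : Set (ℕ × ℕ) := {p | Even (p.1 + p.2) ∧ vv a p < x}
end

section CorePart1
variable (a : ℝ) (ha0 : -1 < a) (ha1 : a < 1) (hirr : Irrational a) (σ δ : ℕ) (hδσ : δ ≤ σ)

lemma corecnt (a : ℝ) (ha0 : -1 < a) (ha1 : a < 1) (hirr : Irrational a) (σ δ : ℕ) (hδσ : δ ≤ σ)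
    (J : ℕ) (hJ1 : ((σ:ℝ)+δ+1) ≤ J*(1-a)) (hJ2 : ((σ:ℝ)+1) ≤ J*(1+a)) :
    (Set.ncard (lset a (vv a (σ - δ, σ + δ))) : ℤ) =
      ∑ d ∈ Icc ((δ:ℤ)-(J:ℤ)) ((δ:ℤ)+(J:ℤ)),
        max 0 (((σ:ℤ) + (if d = (δ:ℤ) then -1 else ⌊(((δ:ℤ) - d : ℤ):ℝ)*a⌋)) + 1 - |d|) := by
  have h1a : (0:ℝ) < 1 - a := by linarith
  have h1b : (0:ℝ) < 1 + a := by linarith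
  set ub : ℤ → ℤ := fun d => (σ:ℤ) + (if d = (δ:ℤ) then -1 else ⌊(((δ:ℤ) - d : ℤ):ℝ)*a⌋) with hubdef
  have hV : vv a ((σ - δ : ℕ), (σ + δ : ℕ)) = 2*(σ:ℝ) + 2*(δ:ℝ)*a := by
    simp only [vv]
    push_cast [Nat.cast_sub hδσ]
    ring
  have hcrit : ∀ d s : ℤ, ((2*(s:ℝ) + 2*(d:ℝ)*a < vv a ((σ-δ:ℕ), (σ+δ:ℕ))) ↔ s ≤ ub d) := by
    intro d s
    rw [hV]
    simp only [hubdef]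
    constructor
    · intro h
      by_cases hd : d = (δ:ℤ)
      · subst hd
        rw [if_pos rfl]
        push_cast at h
        have : (s:ℝ) < σ := by linarith
        have : s < (σ:ℤ) := by exact_mod_cast this
        omega
      · rw [if_neg hd]
        have hlt : (s:ℝ) < σ + (((δ:ℤ) - d : ℤ):ℝ)*a := by push_cast at h ⊢; nlinarith
        have h2 : s ≤ ⌊(((σ:ℕ):ℤ):ℝ) + (((δ:ℤ) - d : ℤ):ℝ)*a⌋ :=
          Int.le_floor.mpr (by push_cast at hlt ⊢; linarith)
        rwa [Int.floor_intCast_add] at h2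
    · intro h
      by_cases hd : d = (δ:ℤ)
      · subst hd
        rw [if_pos rfl] at h
        have : (s:ℝ) ≤ (σ:ℝ) - 1 := by
          have : ((s:ℤ):ℝ) ≤ (((σ:ℤ) + -1 : ℤ):ℝ) := by exact_mod_cast h
          push_cast at this ⊢; linarith
        push_cast
        nlinarith
      · rw [if_neg hd] at h
        have hirrx : Irrational ((((δ:ℤ) - d : ℤ):ℝ)*a) := hirr.intCast_mul (by omega)
        have hfl : (⌊(((δ:ℤ) - d : ℤ):ℝ)*a⌋ : ℝ) < (((δ:ℤ) - d : ℤ):ℝ)*a :=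
          lt_of_le_of_ne (Int.floor_le _) fun he => hirrx.ne_int _ he.symm
        have hs : (s:ℝ) ≤ ((σ:ℤ):ℝ) + (⌊(((δ:ℤ) - d : ℤ):ℝ)*a⌋:ℝ) := by exact_mod_cast h
        push_cast at hs hfl ⊢
        nlinarith
  have habs : ∀ d : ℤ, ub d ≤ (σ:ℤ) + |(δ:ℤ) - d| := by
    intro d
    simp only [hubdef]
    by_cases hd : d = (δ:ℤ)
    · rw [if_pos hd]
      have := abs_nonneg ((δ:ℤ) - d)
      omega
    · rw [if_neg hd]
      have h1 : (((δ:ℤ) - d : ℤ):ℝ)*a ≤ ((|(δ:ℤ) - d| : ℤ):ℝ) := by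
        have := abs_mul (((δ:ℤ) - d : ℤ):ℝ) a
        have h2 : |(((δ:ℤ) - d : ℤ):ℝ)| * |a| ≤ |(((δ:ℤ) - d : ℤ):ℝ)| * 1 :=
          mul_le_mul_of_nonneg_left (by rw [abs_le]; constructor <;> linarith) (abs_nonneg _)
        have h3 : |(((δ:ℤ) - d : ℤ):ℝ)| = ((|(δ:ℤ) - d| : ℤ):ℝ) := by
          rw [Int.cast_abs]
        nlinarith [le_abs_self ((((δ:ℤ) - d : ℤ):ℝ)*a)]
      have := Int.floor_le_floor h1
      rw [Int.floor_intCast] at this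
      omega
  have hvan : ∀ d : ℤ, d ∉ Icc ((δ:ℤ)-(J:ℤ)) ((δ:ℤ)+(J:ℤ)) → ub d + 1 ≤ |d| := by
    intro d hd
    simp only [mem_Icc, not_and_or, not_le] at hd
    have hne : d ≠ (δ:ℤ) := by rcases hd with h | h <;> omega
    simp only [hubdef, if_neg hne]
    have hflr : (⌊(((δ:ℤ) - d : ℤ):ℝ)*a⌋ : ℝ) ≤ (((δ:ℤ) - d : ℤ):ℝ)*a := Int.floor_le _
    rcases hd with hd | hd
    · -- d < δ - J : use |d| ≥ -d
      have hjr : (((δ:ℤ) - d : ℤ):ℝ) ≥ (J:ℝ) + 1 := by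
        have : (δ:ℤ) - d ≥ (J:ℤ) + 1 := by omega
        exact_mod_cast this
      have key : ((σ:ℤ):ℝ) + ⌊(((δ:ℤ) - d : ℤ):ℝ)*a⌋ + 1 ≤ (((δ:ℤ) - d : ℤ):ℝ) - (δ:ℝ) := by
        push_cast at hjr hflr ⊢
        nlinarith
      have hz : (σ:ℤ) + ⌊(((δ:ℤ) - d : ℤ):ℝ)*a⌋ + 1 ≤ ((δ:ℤ) - d) - (δ:ℤ) := by exact_mod_cast key
      have : -d ≤ |d| := neg_le_abs d
      omega
    · -- d > δ + J : |d| = d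
      have hjr : ((d - (δ:ℤ) : ℤ):ℝ) ≥ (J:ℝ) + 1 := by
        have : d - (δ:ℤ) ≥ (J:ℤ) + 1 := by omega
        exact_mod_cast this
      have key : ((σ:ℤ):ℝ) + ⌊(((δ:ℤ) - d : ℤ):ℝ)*a⌋ + 1 ≤ (d:ℝ) := by
        push_cast at hjr hflr ⊢
        nlinarith
      have hz : (σ:ℤ) + ⌊(((δ:ℤ) - d : ℤ):ℝ)*a⌋ + 1 ≤ d := by exact_mod_cast key
      have : d ≤ |d| := le_abs_self d
      omega
  -- the finset G
  set G : Finset (ℤ × ℤ) :=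
    ((Icc ((δ:ℤ)-(J:ℤ)) ((δ:ℤ)+(J:ℤ))) ×ˢ (Icc 0 ((σ:ℤ)+(J:ℤ)))).filter
      (fun q => |q.1| ≤ q.2 ∧ q.2 ≤ ub q.1) with hGdef
  have hGmem : ∀ q : ℤ × ℤ, q ∈ G ↔
      (q.1 ∈ Icc ((δ:ℤ)-(J:ℤ)) ((δ:ℤ)+(J:ℤ)) ∧ q.2 ∈ Icc 0 ((σ:ℤ)+(J:ℤ)) ∧
        |q.1| ≤ q.2 ∧ q.2 ≤ ub q.1) := by
    intro q
    simp only [hGdef, mem_filter, mem_product]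
    tauto
  -- image description
  have himg : lset a (vv a ((σ-δ:ℕ), (σ+δ:ℕ))) =
      (fun q : ℤ × ℤ => ((q.2 - q.1).toNat, (q.2 + q.1).toNat)) '' ↑G := by
    ext p
    constructor
    · rintro ⟨hev, hvp⟩
      obtain ⟨c, hc⟩ := hev
      refine ⟨((p.2:ℤ) - c, (c:ℤ)), ?_, ?_⟩
      · have hp1 : (p.1:ℤ) = (c:ℤ) - ((p.2:ℤ) - c) := by omega
        have hp2 : (p.2:ℤ) = (c:ℤ) + ((p.2:ℤ) - c) := by ring
        have hvv : vv a p = 2*((c:ℤ):ℝ) + 2*(((p.2:ℤ) - c : ℤ):ℝ)*a := by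
          simp only [vv]
          have e1 : (p.1:ℝ) = (((c:ℤ) - ((p.2:ℤ) - c) : ℤ):ℝ) := by exact_mod_cast hp1
          have e2 : (p.2:ℝ) = (((c:ℤ) + ((p.2:ℤ) - c) : ℤ):ℝ) := by exact_mod_cast hp2
          rw [e1, e2]; push_cast; ring
        have hsub : ((c:ℤ)) ≤ ub ((p.2:ℤ) - c) := by
          rw [← hcrit]
          rw [← hvv]
          exact hvp
        have habsle : |(p.2:ℤ) - c| ≤ (c:ℤ) := by
          rw [abs_le]; omega
        have hdin : ((p.2:ℤ) - c) ∈ Icc ((δ:ℤ)-(J:ℤ)) ((δ:ℤ)+(J:ℤ)) := by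
          by_contra hcon
          have := hvan _ hcon
          omega
        rw [Finset.mem_coe, hGmem]
        refine ⟨hdin, ?_, habsle, hsub⟩
        · simp only [mem_Icc]
          constructor
          · omega
          · have h1 := habs ((p.2:ℤ) - c)
            simp only [mem_Icc] at hdin
            have : |(δ:ℤ) - ((p.2:ℤ) - c)| ≤ (J:ℤ) := by rw [abs_le]; omega
            omega
      · simp only
        have : ((c:ℤ) - ((p.2:ℤ) - c)).toNat = p.1 := by omega
        have h2 : ((c:ℤ) + ((p.2:ℤ) - c)).toNat = p.2 := by omega
        exact Prod.ext this h2
    · rintro ⟨⟨d, s⟩, hq, rfl⟩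
      rw [Finset.mem_coe, hGmem] at hq
      obtain ⟨hd, hs, habsle, hub⟩ := hq
      simp only [mem_Icc] at hd hs
      have habs' := abs_le.mp habsle
      constructor
      · simp only
        have : (s - d).toNat + (s + d).toNat = (2*s).toNat := by omega
        rw [this]
        exact ⟨s.toNat, by omega⟩
      · have hvv : vv a ((s - d).toNat, (s + d).toNat) = 2*(s:ℝ) + 2*(d:ℝ)*a := by
          simp only [vv]
          have e1 : (((s - d).toNat : ℕ):ℝ) = ((s - d : ℤ):ℝ) := by
            exact_mod_cast Int.toNat_of_nonneg (by omega : (0:ℤ) ≤ s - d)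
          have e2 : (((s + d).toNat : ℕ):ℝ) = ((s + d : ℤ):ℝ) := by
            exact_mod_cast Int.toNat_of_nonneg (by omega : (0:ℤ) ≤ s + d)
          rw [e1, e2]; push_cast; ring
        rw [hvv, hcrit]
        exact hub
  -- injectivity on G
  have hinj : Set.InjOn (fun q : ℤ × ℤ => ((q.2 - q.1).toNat, (q.2 + q.1).toNat)) ↑G := by
    rintro ⟨d, s⟩ hq ⟨d', s'⟩ hq' heq
    rw [Finset.mem_coe, hGmem] at hq hq'
    have h1 := abs_le.mp hq.2.2.1
    have h2 := abs_le.mp hq'.2.2.1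
    simp only [Prod.mk.injEq] at heq
    obtain ⟨e1, e2⟩ := heq
    have : s - d = s' - d' := by omega
    have : s + d = s' + d' := by omega
    have : d = d' ∧ s = s' := by omega
    exact Prod.ext (by omega) (by omega)
  rw [himg, Set.ncard_image_of_injOn hinj, Set.ncard_coe_finset]
  -- fiberwise count
  rw [Finset.card_eq_sum_card_fiberwise
    (f := Prod.fst) (t := Icc ((δ:ℤ)-(J:ℤ)) ((δ:ℤ)+(J:ℤ)))
    (fun q hq => ((hGmem q).mp hq).1)]
  rw [Nat.cast_sum]
  apply Finset.sum_congr rfl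
  intro d hd
  have hfib : (G.filter (fun q => q.1 = d)).card = (Icc |d| (ub d)).card := by
    apply Finset.card_bij (fun q _ => q.2)
    · rintro ⟨d', s⟩ hq
      simp only [mem_filter] at hq
      obtain ⟨hqG, rfl⟩ := hq
      rw [hGmem] at hqG
      simp only [mem_Icc]
      exact ⟨hqG.2.2.1, hqG.2.2.2⟩
    · rintro ⟨d1, s1⟩ hq1 ⟨d2, s2⟩ hq2 he
      simp only [mem_filter] at hq1 hq2
      simp only at he
      exact Prod.ext (hq1.2.trans hq2.2.symm) he
    · intro s hsmem
      simp only [mem_Icc] at hsmem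
      refine ⟨(d, s), ?_, rfl⟩
      simp only [mem_filter]
      refine ⟨(hGmem (d, s)).mpr ⟨hd, ?_, hsmem.1, hsmem.2⟩, trivial⟩
      simp only [mem_Icc]
      have h1 := habs d
      simp only [mem_Icc] at hd
      have : |(δ:ℤ) - d| ≤ (J:ℤ) := by rw [abs_le]; omega
      have := abs_nonneg d
      omega
  rw [hfib, Int.card_Icc]
  simp only [hubdef]
  rw [Int.toNat_eq_max]
  rw [max_comm]

lemma floor_neg_irr (x : ℝ) (h : Irrational x) : ⌊-x⌋ = -⌊x⌋ - 1 := by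
  rw [Int.floor_neg, ceil_irr x h]; ring

lemma core (a : ℝ) (ha0 : -1 < a) (ha1 : a < 1) (hirr : Irrational a) (σ δ : ℕ) (hδσ : δ ≤ σ) :
    (Set.ncard (lset a (vv a (σ - δ, σ + δ))) : ℤ) =
      (σ:ℤ) - (δ:ℤ)^2 + ∑ k ∈ Icc 1 (σ - δ), ⌊(k:ℝ)/(1+a)⌋
        + ∑ k ∈ Icc 1 (σ + δ), ⌊(k:ℝ)/(1-a)⌋ := by
  have h1a : (0:ℝ) < 1 - a := by linarith
  have h1b : (0:ℝ) < 1 + a := by linarith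
  have hδσR : (δ:ℝ) ≤ (σ:ℝ) := by exact_mod_cast hδσ
  set J : ℕ := ⌈((σ:ℝ)+δ+1)/(1-a)⌉₊ + ⌈((σ:ℝ)+1)/(1+a)⌉₊ with hJdef
  have hJ1 : ((σ:ℝ)+δ+1) ≤ J*(1-a) := by
    have h1 := Nat.le_ceil (((σ:ℝ)+δ+1)/(1-a))
    have h2 : (⌈((σ:ℝ)+δ+1)/(1-a)⌉₊ : ℝ) ≤ J := by
      rw [hJdef]; push_cast; linarith [Nat.cast_nonneg (α := ℝ) ⌈((σ:ℝ)+1)/(1+a)⌉₊]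
    calc ((σ:ℝ)+δ+1) = (((σ:ℝ)+δ+1)/(1-a)) * (1-a) := by field_simp
      _ ≤ J*(1-a) := mul_le_mul_of_nonneg_right (le_trans h1 h2) h1a.le
  have hJ2 : ((σ:ℝ)+1) ≤ J*(1+a) := by
    have h1 := Nat.le_ceil (((σ:ℝ)+1)/(1+a))
    have h2 : (⌈((σ:ℝ)+1)/(1+a)⌉₊ : ℝ) ≤ J := by
      rw [hJdef]; push_cast; linarith [Nat.cast_nonneg (α := ℝ) ⌈((σ:ℝ)+δ+1)/(1-a)⌉₊]
    calc ((σ:ℝ)+1) = (((σ:ℝ)+1)/(1+a)) * (1+a) := by field_simp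
      _ ≤ J*(1+a) := mul_le_mul_of_nonneg_right (le_trans h1 h2) h1b.le
  have hδJ : (δ:ℤ) ≤ (J:ℤ) := by
    have : ((δ:ℝ)) < J := by nlinarith
    exact_mod_cast this.le
  have hirrja : ∀ j : ℕ, 1 ≤ j → Irrational ((j:ℝ)*a) := by
    intro j hj
    have h2 := hirr.intCast_mul (show (j:ℤ) ≠ 0 by exact_mod_cast Nat.one_le_iff_ne_zero.mp hj)
    have : ((j:ℤ):ℝ) = (j:ℝ) := by push_cast; rfl
    rwa [this] at h2
  rw [corecnt a ha0 ha1 hirr σ δ hδσ J hJ1 hJ2,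
    splitsym (fun d => max 0 (((σ:ℤ) + (if d = (δ:ℤ) then -1 else ⌊(((δ:ℤ) - d : ℤ):ℝ)*a⌋)) + 1 - |d|)) (δ:ℤ) J]
  beta_reduce
  -- evaluate the three pieces
  have hgδ : max 0 (((σ:ℤ) + (if (δ:ℤ) = (δ:ℤ) then -1 else ⌊(((δ:ℤ) - δ : ℤ):ℝ)*a⌋)) + 1 - |(δ:ℤ)|) =
      (σ:ℤ) - δ := by
    rw [if_pos rfl, abs_of_nonneg (by positivity : (0:ℤ) ≤ (δ:ℤ))]
    have : (0:ℤ) ≤ (σ:ℤ) - δ := by exact_mod_cast sub_nonneg.mpr (by exact_mod_cast hδσ : (δ:ℤ) ≤ σ)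
    omega
  have hterm : ∀ j ∈ Icc 1 J,
      (max 0 (((σ:ℤ) + (if (δ:ℤ) - j = (δ:ℤ) then -1 else ⌊(((δ:ℤ) - ((δ:ℤ)-j) : ℤ):ℝ)*a⌋)) + 1 - |(δ:ℤ)-j|)
       + max 0 (((σ:ℤ) + (if (δ:ℤ) + j = (δ:ℤ) then -1 else ⌊(((δ:ℤ) - ((δ:ℤ)+j) : ℤ):ℝ)*a⌋)) + 1 - |(δ:ℤ)+j|))
      = max 0 ((σ:ℤ) + ⌊(j:ℝ)*a⌋ + 1 - |(δ:ℤ) - j|) + max 0 ((σ:ℤ) - ⌊(j:ℝ)*a⌋ - δ - j) := by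
    intro j hj
    simp only [mem_Icc] at hj
    have hj1 : (1:ℤ) ≤ (j:ℤ) := by exact_mod_cast hj.1
    have e1 : ((δ:ℤ) - ((δ:ℤ)-(j:ℤ)) : ℤ) = (j:ℤ) := by ring
    have e2 : ((δ:ℤ) - ((δ:ℤ)+(j:ℤ)) : ℤ) = -(j:ℤ) := by ring
    rw [if_neg (by omega), if_neg (by omega), e1, e2]
    have e3 : (((j:ℤ)):ℝ) = (j:ℝ) := by push_cast; rfl
    have e4 : ((-(j:ℤ) : ℤ):ℝ)*a = -((j:ℝ)*a) := by push_cast; ring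
    rw [e3, e4, floor_neg_irr _ (hirrja j hj.1), abs_of_nonneg (by positivity : (0:ℤ) ≤ (δ:ℤ)+(j:ℤ))]
    congr 1
    congr 1
    ring
  rw [Finset.sum_congr rfl hterm, hgδ, Finset.sum_add_distrib]
  -- rewrite the floor sums
  have hi1 : Irrational (1 + a) := by
    have := hirr.intCast_add 1
    rwa [Int.cast_one] at this
  have hi2 : Irrational (1 - a) := by
    have := hirr.intCast_sub 1
    rwa [Int.cast_one] at this
  have hs1 : ∑ k ∈ Icc 1 (σ - δ), ⌊(k:ℝ)/(1+a)⌋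
      = ∑ j ∈ Icc 1 J, max 0 ((σ:ℤ) - (δ:ℤ) - (j:ℤ) - ⌊(j:ℝ)*a⌋) := by
    rw [sumfloor (1+a) h1b hi1 (σ - δ) J
      (by rw [Nat.cast_sub hδσ]; nlinarith)]
    apply Finset.sum_congr rfl
    intro j hj
    rw [show (j:ℝ)*(1+a) = (j:ℝ)*a + (j:ℕ) by push_cast; ring, Int.floor_add_natCast]
    rw [Nat.cast_sub hδσ]
    congr 1
    push_cast
    ring
  have hs2 : ∑ k ∈ Icc 1 (σ + δ), ⌊(k:ℝ)/(1-a)⌋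
      = ∑ j ∈ Icc 1 J, max 0 ((σ:ℤ) + (δ:ℤ) + ⌊(j:ℝ)*a⌋ + 1 - (j:ℤ)) := by
    rw [sumfloor (1-a) h1a hi2 (σ + δ) J (by push_cast; nlinarith)]
    apply Finset.sum_congr rfl
    intro j hj
    simp only [mem_Icc] at hj
    rw [show (j:ℝ)*(1-a) = -((j:ℝ)*a) + (j:ℕ) by push_cast; ring, Int.floor_add_natCast,
      floor_neg_irr _ (hirrja j hj.1)]
    congr 1
    push_cast
    ring
  rw [hs1, hs2]
  -- final algebra via gsum
  have hkey := gsum J (δ:ℤ) (σ:ℤ) (fun j => ⌊(j:ℝ)*a⌋) (by positivity)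
    (by exact_mod_cast hδσ) hδJ ?_
  · rw [Finset.sum_sub_distrib] at hkey
    have hre : ∑ j ∈ Icc 1 J, max 0 ((σ:ℤ) + ⌊(j:ℝ)*a⌋ + 1 + (δ:ℤ) - (j:ℤ))
        = ∑ j ∈ Icc 1 J, max 0 ((σ:ℤ) + (δ:ℤ) + ⌊(j:ℝ)*a⌋ + 1 - (j:ℤ)) := by
      apply Finset.sum_congr rfl
      intro j _
      congr 1
      ring
    have hre2 : ∑ j ∈ Icc 1 J, max 0 ((σ:ℤ) - ⌊(j:ℝ)*a⌋ - (δ:ℤ) - (j:ℤ))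
        = ∑ j ∈ Icc 1 J, max 0 ((σ:ℤ) - (δ:ℤ) - (j:ℤ) - ⌊(j:ℝ)*a⌋) := by
      apply Finset.sum_congr rfl
      intro j _
      congr 1
      ring
    rw [hre] at hkey
    rw [hre2]
    linarith
  · intro j hj
    simp only [mem_Icc] at hj
    apply Int.le_floor.mpr
    push_cast
    nlinarith [Nat.cast_nonneg (α := ℝ) j]

section Machinery
variable {a : ℝ}

lemma vv_nonneg (ha0 : -1 < a) (ha1 : a < 1) (p : ℕ × ℕ) : 0 ≤ vv a p := by
  have h1a : (0:ℝ) < 1 - a := by linarith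
  have h1b : (0:ℝ) < 1 + a := by linarith
  have := Nat.cast_nonneg (α := ℝ) p.1
  have := Nat.cast_nonneg (α := ℝ) p.2
  unfold vv
  nlinarith

lemma lset_fin (ha0 : -1 < a) (ha1 : a < 1) (x : ℝ) : (lset a x).Finite := by
  have h1a : (0:ℝ) < 1 - a := by linarith
  have h1b : (0:ℝ) < 1 + a := by linarith
  set n : ℕ := ⌈x/(1-a)⌉₊ + ⌈x/(1+a)⌉₊ + 1 with hn
  apply Set.Finite.subset ((Set.finite_Iio n).prod (Set.finite_Iio n))
  rintro p ⟨hev, hvp⟩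
  have hp1 : (p.1:ℝ) * (1-a) ≤ vv a p := by
    have := mul_nonneg (Nat.cast_nonneg (α := ℝ) p.2) h1b.le
    unfold vv; nlinarith
  have hp2 : (p.2:ℝ) * (1+a) ≤ vv a p := by
    have := mul_nonneg (Nat.cast_nonneg (α := ℝ) p.1) h1a.le
    unfold vv; nlinarith
  constructor
  · have h1 : (p.1:ℝ) < x/(1-a) := by rw [lt_div_iff₀ h1a]; linarith
    have h2 : (p.1:ℝ) < (⌈x/(1-a)⌉₊:ℝ) + 1 := lt_of_lt_of_le h1 (by linarith [Nat.le_ceil (x/(1-a))])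
    have : p.1 < ⌈x/(1-a)⌉₊ + 1 := by exact_mod_cast h2
    simp only [Set.mem_Iio]
    omega
  · have h1 : (p.2:ℝ) < x/(1+a) := by rw [lt_div_iff₀ h1b]; linarith
    have h2 : (p.2:ℝ) < (⌈x/(1+a)⌉₊:ℝ) + 1 := lt_of_lt_of_le h1 (by linarith [Nat.le_ceil (x/(1+a))])
    have : p.2 < ⌈x/(1+a)⌉₊ + 1 := by exact_mod_cast h2
    simp only [Set.mem_Iio]
    omega

lemma vv_inj (hirr : Irrational a) {p q : ℕ × ℕ} (h : vv a p = vv a q) : p = q := by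
  have hlin : ((((p.2:ℤ) - p.1) - ((q.2:ℤ) - q.1) : ℤ):ℝ) * a
      = ((((q.1:ℤ) + q.2) - ((p.1:ℤ) + p.2) : ℤ):ℝ) := by
    unfold vv at h
    push_cast
    nlinarith [h]
  by_cases hc : (((p.2:ℤ) - p.1) - ((q.2:ℤ) - q.1)) = 0
  · rw [hc] at hlin
    simp only [Int.cast_zero, zero_mul] at hlin
    have h0 : (((q.1:ℤ) + q.2) - ((p.1:ℤ) + p.2) : ℤ) = 0 := by exact_mod_cast hlin.symm
    have := hc
    refine Prod.ext ?_ ?_ <;> omega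
  · exfalso
    have := hirr.intCast_mul hc
    rw [hlin] at this
    exact this.ne_int _ rfl

lemma L1le (ha0 : -1 < a) (ha1 : a < 1) (hirr : Irrational a) (m₁ m₂ : ℕ)
    (hev : Even (m₁ + m₂)) (hle : m₁ ≤ m₂) :
    ((m₁:ℚ) + m₂) / 2 - (m₁:ℚ)^2/4 + (m₁:ℚ)*m₂/2 - (m₂:ℚ)^2/4
      + ((∑ k ∈ Icc 1 m₁, ⌊(k:ℝ)/(1+a)⌋ : ℤ) : ℚ)
      + ((∑ k ∈ Icc 1 m₂, ⌊(k:ℝ)/(1-a)⌋ : ℤ) : ℚ)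
      = (Set.ncard (lset a (vv a (m₁, m₂))) : ℚ) := by
  obtain ⟨c, hc⟩ := hev
  set σ : ℕ := c with hσ
  set δ : ℕ := m₂ - c with hδ
  have h1 : m₁ = σ - δ := by omega
  have h2 : m₂ = σ + δ := by omega
  have hδσ : δ ≤ σ := by omega
  have hcore := core a ha0 ha1 hirr σ δ hδσ
  rw [h1, h2]
  have hm1 : ((σ - δ : ℕ):ℚ) = (σ:ℚ) - (δ:ℚ) := by
    push_cast [Nat.cast_sub hδσ]; ring
  have hQ : ((Set.ncard (lset a (vv a (σ - δ, σ + δ))) : ℤ) : ℚ)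
      = ((σ:ℤ):ℚ) - ((δ:ℤ):ℚ)^2 + ((∑ k ∈ Icc 1 (σ - δ), ⌊(k:ℝ)/(1+a)⌋ : ℤ):ℚ)
        + ((∑ k ∈ Icc 1 (σ + δ), ⌊(k:ℝ)/(1-a)⌋ : ℤ):ℚ) := by
    rw [hcore]; push_cast; ring
  push_cast at hQ ⊢
  rw [hm1] at *
  push_cast at hQ ⊢
  linarith [hQ]

lemma vv_swap' (p : ℕ × ℕ) : vv a (p.2, p.1) = vv (-a) p := by
  unfold vv; push_cast; ring

lemma lset_swap (m : ℕ × ℕ) :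
    lset (-a) (vv (-a) (m.2, m.1)) = Prod.swap '' (lset a (vv a m)) := by
  have hvm : vv (-a) (m.2, m.1) = vv a m := by unfold vv; push_cast; ring
  ext q
  simp only [Set.mem_image, lset, Set.mem_setOf_eq, Prod.exists]
  constructor
  · rintro ⟨hev, hvq⟩
    refine ⟨q.2, q.1, ⟨by simpa [Nat.add_comm] using hev, ?_⟩, ?_⟩
    · have h2 : vv a ((q.2, q.1) : ℕ × ℕ) = vv (-a) q := by unfold vv; push_cast; ring
      rw [hvm] at hvq
      rw [h2]
      exact hvq
    · exact Prod.ext rfl rfl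
  · rintro ⟨r1, r2, ⟨hev, hvr⟩, hsw⟩
    have hq : q = (r2, r1) := by rw [← hsw]; rfl
    subst hq
    refine ⟨by simpa [Nat.add_comm] using hev, ?_⟩
    have : vv (-a) ((r2, r1) : ℕ × ℕ) = vv a ((r1, r2) : ℕ × ℕ) := by unfold vv; push_cast; ring
    rw [hvm, this]
    exact hvr

lemma ncard_swap (m : ℕ × ℕ) :
    (lset (-a) (vv (-a) (m.2, m.1))).ncard = (lset a (vv a m)).ncard := by
  rw [lset_swap, Set.ncard_image_of_injective _ Prod.swap_injective]

lemma L1 (ha0 : -1 < a) (ha1 : a < 1) (hirr : Irrational a) (m₁ m₂ : ℕ)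
    (hev : Even (m₁ + m₂)) :
    ((m₁:ℚ) + m₂) / 2 - (m₁:ℚ)^2/4 + (m₁:ℚ)*m₂/2 - (m₂:ℚ)^2/4
      + ((∑ k ∈ Icc 1 m₁, ⌊(k:ℝ)/(1+a)⌋ : ℤ) : ℚ)
      + ((∑ k ∈ Icc 1 m₂, ⌊(k:ℝ)/(1-a)⌋ : ℤ) : ℚ)
      = (Set.ncard (lset a (vv a (m₁, m₂))) : ℚ) := by
  rcases le_total m₁ m₂ with hle | hle
  · exact L1le ha0 ha1 hirr m₁ m₂ hev hle
  · have h := L1le (a := -a) (by linarith) (by linarith) hirr.neg m₂ m₁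
      (by rwa [Nat.add_comm]) hle
    rw [show (1:ℝ) + -a = 1 - a by ring, show (1:ℝ) - -a = 1 + a by ring] at h
    have hsw := ncard_swap (a := a) (m := (m₁, m₂))
    simp only at hsw
    rw [hsw] at h
    linear_combination h

end Machinery

section Bij
variable {a : ℝ}

lemma czero (ha0 : -1 < a) (ha1 : a < 1) : Set.ncard (lset a (vv a (0, 0))) = 0 := by
  have : lset a (vv a (0, 0)) = ∅ := by
    ext q
    simp only [lset, Set.mem_setOf_eq, Set.mem_empty_iff_false, iff_false, not_and, not_lt]
    intro _
    have h0 : vv a ((0,0) : ℕ × ℕ) = 0 := by unfold vv; push_cast; ring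
    rw [h0]
    exact vv_nonneg ha0 ha1 q
  rw [this, Set.ncard_empty]

lemma cstrict (ha0 : -1 < a) (ha1 : a < 1) {p q : ℕ × ℕ} (hp : Even (p.1 + p.2)) (hv : vv a p < vv a q) :
    Set.ncard (lset a (vv a p)) < Set.ncard (lset a (vv a q)) := by
  have hfin := lset_fin ha0 ha1 (vv a q)
  have hsub : insert p (lset a (vv a p)) ⊆ lset a (vv a q) := by
    rintro r (rfl | ⟨hev, hvr⟩)
    · exact ⟨hp, hv⟩
    · exact ⟨hev, lt_trans hvr hv⟩
  have hnot : p ∉ lset a (vv a p) := fun ⟨_, h⟩ => lt_irrefl _ h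
  calc Set.ncard (lset a (vv a p)) < Set.ncard (insert p (lset a (vv a p))) := by
        rw [Set.ncard_insert_of_notMem hnot ((lset_fin ha0 ha1 _))]
        omega
    _ ≤ Set.ncard (lset a (vv a q)) := Set.ncard_le_ncard hsub hfin

lemma cinj (ha0 : -1 < a) (ha1 : a < 1) (hirr : Irrational a) {p q : ℕ × ℕ} (hp : Even (p.1 + p.2)) (hq : Even (q.1 + q.2))
    (h : Set.ncard (lset a (vv a p)) = Set.ncard (lset a (vv a q))) : p = q := by
  rcases lt_trichotomy (vv a p) (vv a q) with hv | hv | hv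
  · exact absurd h (Nat.ne_of_lt (cstrict ha0 ha1 hp hv))
  · exact vv_inj hirr hv
  · exact absurd h.symm (Nat.ne_of_lt (cstrict ha0 ha1 hq hv))

lemma csucc (ha0 : -1 < a) (ha1 : a < 1) (hirr : Irrational a) {p : ℕ × ℕ} (hp : Even (p.1 + p.2)) :
    ∃ r : ℕ × ℕ, Even (r.1 + r.2) ∧
      Set.ncard (lset a (vv a r)) = Set.ncard (lset a (vv a p)) + 1 := by
  have h1a : (0:ℝ) < 1 - a := by linarith
  set q₀ : ℕ × ℕ := (p.1 + 2, p.2) with hq₀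
  have hq₀ev : Even (q₀.1 + q₀.2) := by
    simp only [hq₀]
    obtain ⟨c, hc⟩ := hp
    exact ⟨c + 1, by omega⟩
  have hq₀v : vv a p < vv a q₀ := by
    simp only [hq₀, vv]
    push_cast
    nlinarith
  set U' : Set (ℕ × ℕ) := {q | Even (q.1 + q.2) ∧ vv a p < vv a q ∧ vv a q ≤ vv a q₀} with hU'
  have hU'fin : U'.Finite := by
    apply Set.Finite.subset (lset_fin ha0 ha1 (vv a q₀ + 1))
    rintro q ⟨hev, _, hle⟩
    exact ⟨hev, by linarith⟩
  have hU'ne : U'.Nonempty := ⟨q₀, hq₀ev, hq₀v, le_refl _⟩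
  obtain ⟨r, hrU, hrmin⟩ := Set.exists_min_image U' (vv a) hU'fin hU'ne
  obtain ⟨hrev, hrv, hrle⟩ := hrU
  refine ⟨r, hrev, ?_⟩
  have hins : lset a (vv a r) = insert p (lset a (vv a p)) := by
    ext q
    constructor
    · rintro ⟨hev, hvq⟩
      rcases lt_trichotomy (vv a q) (vv a p) with hv | hv | hv
      · exact Set.mem_insert_of_mem _ ⟨hev, hv⟩
      · rw [vv_inj hirr hv]
        exact Set.mem_insert _ _
      · exfalso
        rcases le_total (vv a q) (vv a q₀) with hle2 | hle2
        · have : r ∈ U' → vv a r ≤ vv a q := fun _ => hrmin q ⟨hev, hv, hle2⟩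
          have := hrmin q ⟨hev, hv, hle2⟩
          linarith
        · linarith
    · rintro (rfl | ⟨hev, hvq⟩)
      · exact ⟨hp, hrv⟩
      · exact ⟨hev, by linarith⟩
  have hnm : p ∉ lset a (vv a p) := fun hq => lt_irrefl _ hq.2
  rw [hins, Set.ncard_insert_of_notMem hnm (lset_fin ha0 ha1 _)]

lemma csurj (ha0 : -1 < a) (ha1 : a < 1) (hirr : Irrational a) : ∀ n : ℕ, ∃ p : ℕ × ℕ, Even (p.1 + p.2) ∧
    Set.ncard (lset a (vv a p)) = n := by
  intro n
  induction n with
  | zero => exact ⟨(0,0), ⟨0, rfl⟩, czero ha0 ha1⟩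
  | succ n ih =>
    obtain ⟨p, hp, hn⟩ := ih
    obtain ⟨r, hr, hcard⟩ := csucc ha0 ha1 hirr hp
    exact ⟨r, hr, by omega⟩

end Bij

theorem stmt_7 (a : ℝ) (ha0 : 0 < a) (ha1 : a < 1) (hirr : Irrational a) :
    Set.BijOn
      (fun p : ℕ × ℕ =>
        (p.1 + p.2 : ℚ) / 2 - (p.1 : ℚ) ^ 2 / 4 + (p.1 : ℚ) * p.2 / 2 - (p.2 : ℚ) ^ 2 / 4
          + (∑ k ∈ Finset.Icc 1 p.1, ⌊(k : ℝ) / (1 + a)⌋ : ℤ)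
          + (∑ k ∈ Finset.Icc 1 p.2, ⌊(k : ℝ) / (1 - a)⌋ : ℤ))
      {p : ℕ × ℕ | Even (p.1 + p.2)}
      {q : ℚ | ∃ n : ℕ, q = n} := by
  have ha0' : -1 < a := by linarith
  have key : ∀ p : ℕ × ℕ, Even (p.1 + p.2) →
      ((p.1:ℚ) + p.2) / 2 - (p.1:ℚ)^2/4 + (p.1:ℚ)*p.2/2 - (p.2:ℚ)^2/4
        + ((∑ k ∈ Icc 1 p.1, ⌊(k:ℝ)/(1+a)⌋ : ℤ) : ℚ)
        + ((∑ k ∈ Icc 1 p.2, ⌊(k:ℝ)/(1-a)⌋ : ℤ) : ℚ)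
        = (Set.ncard (lset a (vv a p)) : ℚ) := by
    intro p hp
    have := L1 ha0' ha1 hirr p.1 p.2 hp
    simpa using this
  refine ⟨?_, ?_, ?_⟩
  · intro p hp
    simp only [Set.mem_setOf_eq] at hp ⊢
    exact ⟨Set.ncard (lset a (vv a p)), key p hp⟩
  · intro p hp q hq heq
    simp only [Set.mem_setOf_eq] at hp hq
    simp only [key p hp, key q hq] at heq
    exact cinj ha0' ha1 hirr hp hq (by exact_mod_cast heq)
  · rintro x ⟨n, rfl⟩
    obtain ⟨p, hp, hc⟩ := csurj ha0' ha1 hirr n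
    refine ⟨p, hp, ?_⟩
    simp only
    rw [key p hp, hc]
end CorePart1
end

section
/- Let a ∈ (0,1) be irrational. For nonnegative integers m₁+m₂ even, set A(m₁,m₂) = m₁·2π/(1+a) + m₂·2π/(1-a). Then the values A(m₁,m₂) over all such pairs are pairwise distinct, and listing them in increasing order yields a sequence (c_k)_{k≥0} whose k-th term is the image of the k-th element under the index bijection; in particular c₀ = 0 and c₁ = 4π/(1+a). -/
open Real in
theorem stmt_8 (a : ℝ) (ha0 : 0 < a) (ha1 : a < 1) (hirr : Irrational a) :
    Set.InjOn
        (fun p : ℕ × ℕ => (p.1 : ℝ) * (2 * π / (1 + a)) + (p.2 : ℝ) * (2 * π / (1 - a)))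
        {p : ℕ × ℕ | Even (p.1 + p.2)}
    ∧ IsLeast
        {x : ℝ | ∃ p : ℕ × ℕ, Even (p.1 + p.2) ∧
          x = (p.1 : ℝ) * (2 * π / (1 + a)) + (p.2 : ℝ) * (2 * π / (1 - a)) ∧ 0 < x}
        (4 * π / (1 + a)) := by
  have hπ := Real.pi_pos
  have h1a : (0:ℝ) < 1 + a := by linarith
  have h1a' : (0:ℝ) < 1 - a := by linarith
  have h1ne : (1:ℝ) + a ≠ 0 := ne_of_gt h1a
  have h1ne' : (1:ℝ) - a ≠ 0 := ne_of_gt h1a'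
  have h2π : (2:ℝ) * π ≠ 0 := by positivity
  have key : ∀ p q : ℤ, (p:ℝ) + q * a = 0 → p = 0 ∧ q = 0 := by
    intro p q h
    by_cases hq : q = 0
    · subst hq
      simp at h
      exact ⟨by exact_mod_cast h, rfl⟩
    · exfalso
      have hqR : (q:ℝ) ≠ 0 := Int.cast_ne_zero.mpr hq
      have : a = ((-p : ℚ)/q : ℚ) := by
        push_cast
        field_simp
        linarith
      exact hirr ⟨(-p : ℚ)/q, this.symm⟩
  constructor
  · intro p hp q hq h
    simp only at h
    have hE : ((p.1:ℝ) * (2 * π / (1 + a)) + (p.2:ℝ) * (2 * π / (1 - a))) * ((1+a)*(1-a))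
        = ((q.1:ℝ) * (2 * π / (1 + a)) + (q.2:ℝ) * (2 * π / (1 - a))) * ((1+a)*(1-a)) := by
      rw [h]
    field_simp at hE
    have hmul : (((p.1:ℤ) + p.2 - q.1 - q.2 : ℤ) + ((p.2:ℤ) - p.1 + q.1 - q.2 : ℤ) * a) * (2*π) = 0 := by
      push_cast
      ring_nf
      ring_nf at hE
      linear_combination (2 * π) * hE
    have h0 : (((p.1:ℤ) + p.2 - q.1 - q.2 : ℤ) : ℝ) + (((p.2:ℤ) - p.1 + q.1 - q.2 : ℤ) : ℝ) * a = 0 := by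
      rcases mul_eq_zero.mp hmul with h' | h'
      · exact h'
      · exact absurd h' h2π
    obtain ⟨e1, e2⟩ := key _ _ h0
    have : p.1 = q.1 ∧ p.2 = q.2 := by omega
    exact Prod.ext this.1 this.2
  · constructor
    · refine ⟨(2, 0), ⟨1, by norm_num⟩, ?_, by positivity⟩
      push_cast
      field_simp
      ring
    · rintro x ⟨p, hev, hx, hxpos⟩
      obtain ⟨k, hk⟩ := hev
      have hne : p.1 + p.2 ≠ 0 := by
        rintro h0
        have h1 : p.1 = 0 := by omega
        have h2 : p.2 = 0 := by omega
        rw [hx, h1, h2] at hxpos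
        norm_num at hxpos
      have hsum : 2 ≤ p.1 + p.2 := by omega
      have hc : 0 < 2 * π / (1 + a) := by positivity
      have hcd : 2*π/(1+a) ≤ 2*π/(1-a) := by
        apply div_le_div_of_nonneg_left (by positivity) h1a'
        linarith
      have hp2 : (0:ℝ) ≤ (p.2:ℝ) := by positivity
      have hstep := mul_le_mul_of_nonneg_left hcd hp2
      calc 4*π/(1+a) = 2 * (2*π/(1+a)) := by ring
        _ ≤ ((p.1:ℝ)+(p.2:ℝ)) * (2*π/(1+a)) := by
            apply mul_le_mul_of_nonneg_right _ (le_of_lt hc)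
            exact_mod_cast (by exact_mod_cast hsum : (2:ℝ) ≤ ((p.1+p.2 : ℕ) : ℝ))
        _ ≤ x := by
            rw [hx]
            nlinarith [hstep]
end
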